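/- arXiv:1605.00535 — 5 statements merged into one kernel-verified Lean document; each statement's English description precedes it below -/
import Mathlib

section
/- Let u be a Lebesgue integrable function on B_1 ⊂ ℝⁿ, n ≥ 1, and let δ : (0,1) → (0,∞) be monotonically increasing with lim_{r→0} δ(r) = 0. Assume that for every x̄ ∈ B_{1/4} there exist a(x̄) ∈ ℝ and b(x̄) ∈ ℝⁿ such that ⨍_{B_r(x̄)} |u(x) − [a(x̄) + b(x̄)·(x − x̄)]| dx ≤ r δ(r) for all 0 < r < 1/2. Then, after modifying u on a set of Lebesgue measure zero, u belongs to C^1(B_{1/4}), with u(x̄) = a(x̄) and ∇u(x̄) = b(x̄) for every x̄ ∈ B_{1/4}; moreover there is a dimensional constant C such that |∇u(x) − ∇u(y)| ≤ C δ(4|x − y|) for all x, y ∈ B_{1/4} with 0 < |x − y| < 1/8. -/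
open MeasureTheory Metric Set Filter
open scoped Topology RealInnerProductSpace

local notation "E" n => EuclideanSpace ℝ (Fin n)

lemma nontrivE {n : ℕ} (hn : 1 ≤ n) : Nontrivial (E n) := by
  apply Module.nontrivial_of_finrank_pos (R := ℝ) (M := E n)
  · rw [finrank_euclideanSpace_fin]; omega

lemma ball_vol_toReal {n : ℕ} (hn : 1 ≤ n) (x : E n) {ρ : ℝ} (hρ : 0 ≤ ρ) :
    (volume (ball x ρ)).toReal
      = ρ ^ n * (volume (ball (0 : E n) 1)).toReal := by
  haveI := nontrivE hn
  rw [Measure.addHaar_ball _ _ hρ, ENNReal.toReal_mul, ENNReal.toReal_ofReal (by positivity),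
    finrank_euclideanSpace_fin]

lemma affine_integrableOn {n : ℕ} (c : ℝ) (w x x₀ : E n) {ρ : ℝ} :
    IntegrableOn (fun z => |c + ⟪w, z - x⟫|) (ball x₀ ρ) := by
  have hc : Continuous fun z : E n => |c + ⟪w, z - x⟫| := by
    have : Continuous fun z : E n => ⟪w, z - x⟫ :=
      Continuous.inner continuous_const (continuous_id.sub continuous_const)
    exact (continuous_const.add this).abs
  exact (hc.continuousOn.integrableOn_compact (isCompact_closedBall x₀ ρ)).mono_set
    ball_subset_closedBall

lemma affine_slope_bound {n : ℕ} (hn : 1 ≤ n) (x w : E n) (c : ℝ) {ρ : ℝ} (hρ : 0 < ρ) :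
    (volume (ball x ρ)).toReal * (ρ * ‖w‖)
      ≤ 4 ^ (n + 1) * ∫ z in ball x ρ, |c + ⟪w, z - x⟫| := by
  rcases eq_or_ne w 0 with rfl | hw
  · simp only [norm_zero, mul_zero]
    have : (0:ℝ) ≤ ∫ z in ball x ρ, |c + ⟪(0 : E n), z - x⟫| :=
      integral_nonneg fun z => abs_nonneg _
    positivity
  have hnw : 0 < ‖w‖ := norm_pos_iff.2 hw
  set e : E n := ‖w‖⁻¹ • w with he_def
  have he : ‖e‖ = 1 := norm_smul_inv_norm hw
  have hwe : ⟪w, e⟫ = ‖w‖ := by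
    rw [he_def, real_inner_smul_right, real_inner_self_eq_norm_sq]
    field_simp
  set s : ℝ := if 0 ≤ c then 1 else -1 with hs_def
  have hs1 : |s| = 1 := by rw [hs_def]; split <;> simp
  have hs2 : s * s = 1 := by rw [hs_def]; split <;> norm_num
  have hsc : 0 ≤ s * c := by
    rw [hs_def]; split
    · simpa using ‹0 ≤ c›
    · simp only [neg_mul, one_mul, neg_nonneg]; linarith [lt_of_not_ge ‹¬ 0 ≤ c›]
  set ctr : E n := x + (s * (3 * ρ / 5)) • e with hctr_def
  set A : Set (E n) := ball ctr (ρ / 4) with hA_def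
  have hA_sub : A ⊆ ball x ρ := by
    intro z hz
    have h1 : dist z ctr < ρ / 4 := mem_ball.mp hz
    have h2 : dist ctr x = 3 * ρ / 5 := by
      rw [hctr_def, dist_eq_norm, add_sub_cancel_left, norm_smul, he, mul_one,
        Real.norm_eq_abs, abs_mul, hs1, one_mul, abs_of_pos (by linarith)]
    have := dist_triangle z ctr x
    rw [mem_ball, ]
    calc dist z x ≤ dist z ctr + dist ctr x := dist_triangle z ctr x
      _ < ρ / 4 + 3 * ρ / 5 := by rw [h2]; linarith
      _ < ρ := by linarith
  have hpt : ∀ z ∈ A, ρ * ‖w‖ / 4 ≤ |c + ⟪w, z - x⟫| := by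
    intro z hz
    have hz' : ‖z - ctr‖ < ρ / 4 := by
      rw [← dist_eq_norm]; exact mem_ball.mp hz
    have hdec : ⟪w, z - x⟫ = s * (3 * ρ / 5) * ‖w‖ + ⟪w, z - ctr⟫ := by
      have hzx : z - x = (s * (3 * ρ / 5)) • e + (z - ctr) := by
        rw [hctr_def]; abel
      rw [hzx, inner_add_right, real_inner_smul_right, hwe]
    have hcs : |⟪w, z - ctr⟫| ≤ ‖w‖ * (ρ / 4) := by
      calc |⟪w, z - ctr⟫| ≤ ‖w‖ * ‖z - ctr‖ := abs_real_inner_le_norm w _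
        _ ≤ ‖w‖ * (ρ / 4) := by nlinarith
    have key : ρ * ‖w‖ / 4 ≤ s * (c + ⟪w, z - x⟫) := by
      rw [mul_add, hdec, mul_add, ← mul_assoc, ← mul_assoc, hs2, one_mul]
      have : -(‖w‖ * (ρ / 4)) ≤ s * ⟪w, z - ctr⟫ := by
        have h1 : |s * ⟪w, z - ctr⟫| ≤ ‖w‖ * (ρ / 4) := by
          rw [abs_mul, hs1, one_mul]; exact hcs
        linarith [neg_abs_le (s * ⟪w, z - ctr⟫)]
      nlinarith
    calc ρ * ‖w‖ / 4 ≤ s * (c + ⟪w, z - x⟫) := key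
      _ ≤ |s * (c + ⟪w, z - x⟫)| := le_abs_self _
      _ = |c + ⟪w, z - x⟫| := by rw [abs_mul, hs1, one_mul]
  have hint : IntegrableOn (fun z => |c + ⟪w, z - x⟫|) (ball x ρ) :=
    affine_integrableOn c w x x
  have hstep1 : ρ * ‖w‖ / 4 * (volume A).toReal ≤ ∫ z in A, |c + ⟪w, z - x⟫| :=
    setIntegral_ge_of_const_le_real measurableSet_ball measure_ball_lt_top.ne hpt
      (affine_integrableOn c w x ctr)
  have hstep2 : ∫ z in A, |c + ⟪w, z - x⟫| ≤ ∫ z in ball x ρ, |c + ⟪w, z - x⟫| :=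
    setIntegral_mono_set hint (Eventually.of_forall fun z => abs_nonneg _)
      (HasSubset.Subset.eventuallyLE hA_sub)
  have hvA : (volume A).toReal = (ρ / 4) ^ n * (volume (ball (0 : E n) 1)).toReal :=
    ball_vol_toReal hn ctr (by linarith)
  have hvB : (volume (ball x ρ)).toReal = ρ ^ n * (volume (ball (0 : E n) 1)).toReal :=
    ball_vol_toReal hn x hρ.le
  set c₀ : ℝ := (volume (ball (0 : E n) 1)).toReal with hc₀
  have heq : (4:ℝ) ^ (n + 1) * (ρ * ‖w‖ / 4 * ((ρ / 4) ^ n * c₀))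
      = ρ ^ n * c₀ * (ρ * ‖w‖) := by
    rw [div_pow, pow_succ]
    field_simp
  calc (volume (ball x ρ)).toReal * (ρ * ‖w‖) = ρ ^ n * c₀ * (ρ * ‖w‖) := by rw [hvB]
    _ = (4:ℝ) ^ (n + 1) * (ρ * ‖w‖ / 4 * ((ρ / 4) ^ n * c₀)) := heq.symm
    _ = (4:ℝ) ^ (n + 1) * (ρ * ‖w‖ / 4 * (volume A).toReal) := by rw [hvA]
    _ ≤ (4:ℝ) ^ (n + 1) * ∫ z in A, |c + ⟪w, z - x⟫| := by
        apply mul_le_mul_of_nonneg_left hstep1 (by positivity)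
    _ ≤ (4:ℝ) ^ (n + 1) * ∫ z in ball x ρ, |c + ⟪w, z - x⟫| := by
        apply mul_le_mul_of_nonneg_left hstep2 (by positivity)

lemma affine_continuous {n : ℕ} (c : ℝ) (w x : E n) :
    Continuous fun z : E n => c + ⟪w, z - x⟫ :=
  continuous_const.add (Continuous.inner continuous_const (continuous_id.sub continuous_const))

lemma affine_integrableOn' {n : ℕ} (c : ℝ) (w x x₀ : E n) {ρ : ℝ} :
    IntegrableOn (fun z => c + ⟪w, z - x⟫) (ball x₀ ρ) :=
  ((affine_continuous c w x).continuousOn.integrableOn_compact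
    (isCompact_closedBall x₀ ρ)).mono_set ball_subset_closedBall

lemma affine_const_bound {n : ℕ} (x w : E n) (c : ℝ) {ρ : ℝ} (hρ : 0 < ρ) :
    |c| * (volume (ball x ρ)).toReal
      ≤ (∫ z in ball x ρ, |c + ⟪w, z - x⟫|) + ρ * ‖w‖ * (volume (ball x ρ)).toReal := by
  have hpt : ∀ z ∈ ball x ρ, |c| ≤ |c + ⟪w, z - x⟫| + ρ * ‖w‖ := by
    intro z hz
    have h1 : |⟪w, z - x⟫| ≤ ‖w‖ * ρ := by
      calc |⟪w, z - x⟫| ≤ ‖w‖ * ‖z - x‖ := abs_real_inner_le_norm w _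
        _ ≤ ‖w‖ * ρ := by
            have : ‖z - x‖ < ρ := by rw [← dist_eq_norm]; exact mem_ball.mp hz
            nlinarith [norm_nonneg w]
    calc |c| = |c + ⟪w, z - x⟫ - ⟪w, z - x⟫| := by ring_nf
      _ ≤ |c + ⟪w, z - x⟫| + |⟪w, z - x⟫| := abs_sub _ _
      _ ≤ |c + ⟪w, z - x⟫| + ρ * ‖w‖ := by nlinarith
  have hint : IntegrableOn (fun z => |c + ⟪w, z - x⟫| + ρ * ‖w‖) (ball x ρ) :=
    (affine_integrableOn c w x x).add (integrableOn_const measure_ball_lt_top.ne)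
  have := setIntegral_ge_of_const_le_real measurableSet_ball measure_ball_lt_top.ne hpt hint
  rw [integral_add (affine_integrableOn c w x x)
    (integrableOn_const measure_ball_lt_top.ne), setIntegral_const,
    smul_eq_mul, measureReal_def] at this
  linarith [this]

lemma setIntegral_le_of_average_le {n : ℕ} {x₀ : E n} {r M : ℝ} (hr : 0 < r) (g : (E n) → ℝ)
    (h : ⨍ z in ball x₀ r, g z ≤ M) :
    ∫ z in ball x₀ r, g z ≤ (volume (ball x₀ r)).toReal * M := by
  have hv : 0 < (volume (ball x₀ r)).toReal :=
    ENNReal.toReal_pos (measure_ball_pos volume x₀ hr).ne' measure_ball_lt_top.ne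
  rw [setAverage_eq, smul_eq_mul] at h
  calc ∫ z in ball x₀ r, g z
      = (volume (ball x₀ r)).toReal * ((volume (ball x₀ r)).toReal⁻¹ * ∫ z in ball x₀ r, g z) := by
        field_simp
    _ ≤ (volume (ball x₀ r)).toReal * M := mul_le_mul_of_nonneg_left h hv.le

lemma key_estimate {n : ℕ} (hn : 1 ≤ n) (u : (E n) → ℝ)
    (hu : IntegrableOn u (ball (0 : E n) 1)) (δ : ℝ → ℝ)
    (hδpos : ∀ r ∈ Ioo (0:ℝ) 1, 0 < δ r)
    (hδmono : ∀ r s : ℝ, 0 < r → r ≤ s → s < 1 → δ r ≤ δ s)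
    (a : (E n) → ℝ) (b : (E n) → E n)
    (hyp : ∀ xb ∈ ball (0 : E n) (1/4 : ℝ), ∀ r ∈ Ioo (0:ℝ) (1/2 : ℝ),
      ⨍ x in ball xb r, |u x - (a xb + ⟪b xb, x - xb⟫)| ≤ r * δ r)
    {x y : E n} (hx : x ∈ ball (0 : E n) (1/4 : ℝ)) (hy : y ∈ ball (0 : E n) (1/4 : ℝ))
    (hxy : x ≠ y) (hd : dist x y < 1/8) :
    ‖b x - b y‖ ≤ (4 ^ (n+1) * (1 + 2 ^ (n+1))) * δ (4 * dist x y) ∧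
    |a x - a y - ⟪b y, x - y⟫|
      ≤ ((1 + 4 ^ (n+1)) * (1 + 2 ^ (n+1))) * (dist x y * δ (4 * dist x y)) := by
  set ρ : ℝ := dist x y with hρ_def
  have hρ : 0 < ρ := dist_pos.2 hxy
  have hρ8 : ρ < 1/8 := hd
  set c : ℝ := a x - a y - ⟪b y, x - y⟫ with hc_def
  set w : E n := b x - b y with hw_def
  -- decomposition of the difference of affine approximations
  have hdecomp : ∀ z : E n,
      (a x + ⟪b x, z - x⟫) - (a y + ⟪b y, z - y⟫) = c + ⟪w, z - x⟫ := by
    intro z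
    have h1 : ⟪b y, z - y⟫ = ⟪b y, z - x⟫ + ⟪b y, x - y⟫ := by
      rw [← inner_add_right]
      congr 1
      abel
    rw [hc_def, hw_def, inner_sub_left, h1]
    ring
  have hsub1 : ball x ρ ⊆ ball y (2 * ρ) := by
    intro z hz
    have := mem_ball.mp hz
    rw [mem_ball]
    calc dist z y ≤ dist z x + dist x y := dist_triangle z x y
      _ < ρ + ρ := by rw [← hρ_def]; linarith
      _ = 2 * ρ := by ring
  have hsub2 : ball y (2 * ρ) ⊆ ball (0 : E n) 1 := by
    intro z hz
    have h1 := mem_ball.mp hz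
    have h2 := mem_ball.mp hy
    rw [mem_ball]
    calc dist z 0 ≤ dist z y + dist y 0 := dist_triangle z y 0
      _ < 2 * ρ + 1/4 := by linarith
      _ < 1 := by linarith
  have hu2 : IntegrableOn u (ball y (2 * ρ)) := hu.mono_set hsub2
  have hu1 : IntegrableOn u (ball x ρ) := hu2.mono_set hsub1
  have hPx : IntegrableOn (fun z => |u z - (a x + ⟪b x, z - x⟫)|) (ball x ρ) :=
    (hu1.sub (affine_integrableOn' (a x) (b x) x x)).abs
  have hPy2 : IntegrableOn (fun z => |u z - (a y + ⟪b y, z - y⟫)|) (ball y (2 * ρ)) :=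
    (hu2.sub (affine_integrableOn' (a y) (b y) y y)).abs
  have hPy1 : IntegrableOn (fun z => |u z - (a y + ⟪b y, z - y⟫)|) (ball x ρ) :=
    hPy2.mono_set hsub1
  -- integral bounds from the hypothesis
  have hI1 : ∫ z in ball x ρ, |u z - (a x + ⟪b x, z - x⟫)|
      ≤ (volume (ball x ρ)).toReal * (ρ * δ ρ) :=
    setIntegral_le_of_average_le hρ _ (hyp x hx ρ ⟨hρ, by linarith⟩)
  have hI2 : ∫ z in ball y (2*ρ), |u z - (a y + ⟪b y, z - y⟫)|
      ≤ (volume (ball y (2*ρ))).toReal * (2 * ρ * δ (2*ρ)) :=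
    setIntegral_le_of_average_le (by linarith) _ (hyp y hy (2*ρ) ⟨by linarith, by linarith⟩)
  have hI2' : ∫ z in ball x ρ, |u z - (a y + ⟪b y, z - y⟫)|
      ≤ ∫ z in ball y (2*ρ), |u z - (a y + ⟪b y, z - y⟫)| :=
    setIntegral_mono_set hPy2 (Eventually.of_forall fun z => abs_nonneg _)
      (HasSubset.Subset.eventuallyLE hsub1)
  -- triangle inequality for the affine difference
  have htri : ∫ z in ball x ρ, |c + ⟪w, z - x⟫|
      ≤ (∫ z in ball x ρ, |u z - (a x + ⟪b x, z - x⟫)|)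
        + ∫ z in ball x ρ, |u z - (a y + ⟪b y, z - y⟫)| := by
    rw [← integral_add hPx hPy1]
    apply setIntegral_mono_on (affine_integrableOn c w x x) (hPx.add hPy1) measurableSet_ball
    intro z _
    have := hdecomp z
    calc |c + ⟪w, z - x⟫| = |(a x + ⟪b x, z - x⟫) - (a y + ⟪b y, z - y⟫)| := by rw [this]
      _ = |-(u z - (a x + ⟪b x, z - x⟫)) + (u z - (a y + ⟪b y, z - y⟫))| := by ring_nf
      _ ≤ |-(u z - (a x + ⟪b x, z - x⟫))| + |u z - (a y + ⟪b y, z - y⟫)| := abs_add_le _ _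
      _ = |u z - (a x + ⟪b x, z - x⟫)| + |u z - (a y + ⟪b y, z - y⟫)| := by rw [abs_neg]
  -- volume relation
  set c₀ : ℝ := (volume (ball (0 : E n) 1)).toReal with hc₀_def
  have hV : (volume (ball x ρ)).toReal = ρ ^ n * c₀ := ball_vol_toReal hn x hρ.le
  have hV2 : (volume (ball y (2*ρ))).toReal = 2 ^ n * ((volume (ball x ρ)).toReal) := by
    rw [ball_vol_toReal hn y (by linarith), hV, mul_pow]
    ring
  set V : ℝ := (volume (ball x ρ)).toReal with hV_def
  have hVpos : 0 < V :=
    ENNReal.toReal_pos (measure_ball_pos volume x hρ).ne' measure_ball_lt_top.ne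
  -- monotonicity of δ
  have hδ1 : δ ρ ≤ δ (4 * ρ) := hδmono ρ (4*ρ) hρ (by linarith) (by linarith)
  have hδ2 : δ (2*ρ) ≤ δ (4 * ρ) := hδmono (2*ρ) (4*ρ) (by linarith) (by linarith) (by linarith)
  have hδ4pos : 0 < δ (4 * ρ) := hδpos (4*ρ) ⟨by linarith, by linarith⟩
  -- main integral bound
  have hmain : ∫ z in ball x ρ, |c + ⟪w, z - x⟫| ≤ V * (ρ * ((1 + 2^(n+1)) * δ (4*ρ))) := by
    have h2n : (0:ℝ) < 2 ^ n := by positivity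
    calc ∫ z in ball x ρ, |c + ⟪w, z - x⟫|
        ≤ V * (ρ * δ ρ) + 2^n * V * (2 * ρ * δ (2*ρ)) := by
          have := hI2'.trans hI2
          rw [hV2] at this
          linarith [htri]
      _ ≤ V * (ρ * δ (4*ρ)) + 2^n * V * (2 * ρ * δ (4*ρ)) := by
          have e1 : V * (ρ * δ ρ) ≤ V * (ρ * δ (4*ρ)) := by
            apply mul_le_mul_of_nonneg_left _ hVpos.le
            exact mul_le_mul_of_nonneg_left hδ1 hρ.le
          have e2 : 2^n * V * (2 * ρ * δ (2*ρ)) ≤ 2^n * V * (2 * ρ * δ (4*ρ)) := by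
            apply mul_le_mul_of_nonneg_left _ (by positivity)
            apply mul_le_mul_of_nonneg_left hδ2 (by linarith)
          linarith
      _ = V * (ρ * ((1 + 2^(n+1)) * δ (4*ρ))) := by
          rw [pow_succ]
          ring
  -- conclude for the gradient
  have hgrad : ‖w‖ ≤ 4 ^ (n+1) * (1 + 2 ^ (n+1)) * δ (4 * ρ) := by
    have h1 := affine_slope_bound hn x w c hρ
    have h2 : V * (ρ * ‖w‖) ≤ 4^(n+1) * (V * (ρ * ((1 + 2^(n+1)) * δ (4*ρ)))) :=
      h1.trans (mul_le_mul_of_nonneg_left hmain (by positivity))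
    have h3 : V * (ρ * ‖w‖) ≤ V * (ρ * (4^(n+1) * ((1 + 2^(n+1)) * δ (4*ρ)))) := by
      calc V * (ρ * ‖w‖) ≤ 4^(n+1) * (V * (ρ * ((1 + 2^(n+1)) * δ (4*ρ)))) := h2
        _ = V * (ρ * (4^(n+1) * ((1 + 2^(n+1)) * δ (4*ρ)))) := by ring
    have := le_of_mul_le_mul_left (by
      calc ρ * ‖w‖ = V⁻¹ * (V * (ρ * ‖w‖)) := by field_simp
        _ ≤ V⁻¹ * (V * (ρ * (4^(n+1) * ((1 + 2^(n+1)) * δ (4*ρ))))) := by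
            apply mul_le_mul_of_nonneg_left h3 (by positivity)
        _ = ρ * (4^(n+1) * ((1 + 2^(n+1)) * δ (4*ρ))) := by field_simp
      : ρ * ‖w‖ ≤ ρ * (4^(n+1) * ((1 + 2^(n+1)) * δ (4*ρ)))) hρ
    calc ‖w‖ ≤ 4^(n+1) * ((1 + 2^(n+1)) * δ (4*ρ)) := this
      _ = 4 ^ (n+1) * (1 + 2 ^ (n+1)) * δ (4 * ρ) := by ring
  refine ⟨hgrad, ?_⟩
  -- conclude for the constant
  have h1 := affine_const_bound x w c hρ
  have h2 : |c| * V ≤ V * (ρ * ((1 + 2^(n+1)) * δ (4*ρ)))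
      + ρ * (4 ^ (n+1) * (1 + 2 ^ (n+1)) * δ (4 * ρ)) * V := by
    have : ρ * ‖w‖ * V ≤ ρ * (4 ^ (n+1) * (1 + 2 ^ (n+1)) * δ (4 * ρ)) * V := by
      apply mul_le_mul_of_nonneg_right _ hVpos.le
      exact mul_le_mul_of_nonneg_left hgrad hρ.le
    linarith [hmain, h1]
  have h3 : |c| * V ≤ ((1 + 4^(n+1)) * (1 + 2^(n+1))) * (ρ * δ (4*ρ)) * V := by
    calc |c| * V ≤ V * (ρ * ((1 + 2^(n+1)) * δ (4*ρ)))
        + ρ * (4 ^ (n+1) * (1 + 2 ^ (n+1)) * δ (4 * ρ)) * V := h2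
      _ = ((1 + 4^(n+1)) * (1 + 2^(n+1))) * (ρ * δ (4*ρ)) * V := by ring
  have := le_of_mul_le_mul_right h3 hVpos
  calc |a x - a y - ⟪b y, x - y⟫| = |c| := by rw [hc_def]
    _ ≤ ((1 + 4^(n+1)) * (1 + 2^(n+1))) * (ρ * δ (4*ρ)) := this
    _ = ((1 + 4^(n+1)) * (1 + 2^(n+1))) * (ρ * δ (4 * ρ)) := by ring

lemma hasFDeriv_a {n : ℕ} (hn : 1 ≤ n) (u : (E n) → ℝ)
    (hu : IntegrableOn u (ball (0 : E n) 1)) (δ : ℝ → ℝ)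
    (hδpos : ∀ r ∈ Ioo (0:ℝ) 1, 0 < δ r)
    (hδmono : ∀ r s : ℝ, 0 < r → r ≤ s → s < 1 → δ r ≤ δ s)
    (hδ0 : Tendsto δ (𝓝[>] (0:ℝ)) (𝓝 0))
    (a : (E n) → ℝ) (b : (E n) → E n)
    (hyp : ∀ xb ∈ ball (0 : E n) (1/4 : ℝ), ∀ r ∈ Ioo (0:ℝ) (1/2 : ℝ),
      ⨍ x in ball xb r, |u x - (a xb + ⟪b xb, x - xb⟫)| ≤ r * δ r)
    {y : E n} (hy : y ∈ ball (0 : E n) (1/4 : ℝ)) :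
    HasFDerivAt a ((innerSL ℝ) (b y)) y := by
  rw [hasFDerivAt_iff_isLittleO, Asymptotics.isLittleO_iff]
  intro ε hε
  set K : ℝ := (1 + 4^(n+1)) * (1 + 2^(n+1)) with hK_def
  have hKpos : 0 < K := by positivity
  have hmem : {t : ℝ | δ t < ε / K} ∈ 𝓝[>] (0:ℝ) := by
    have : Iio (ε / K) ∈ 𝓝 (0:ℝ) := Iio_mem_nhds (by positivity)
    exact hδ0 this
  obtain ⟨η, hη, hηsub⟩ := mem_nhdsGT_iff_exists_Ioo_subset.1 hmem
  have hη0 : 0 < η := hη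
  obtain ⟨r₁, hr₁, hball⟩ := Metric.mem_nhds_iff.1 (isOpen_ball.mem_nhds hy)
  set r₀ : ℝ := min (min (1/8) (η/4)) r₁ with hr₀_def
  have hr₀pos : 0 < r₀ := by
    apply lt_min (lt_min (by norm_num) (by linarith))
    exact hr₁
  filter_upwards [ball_mem_nhds y hr₀pos] with x hx
  rcases eq_or_ne x y with rfl | hxy
  · simp
  have hρ : 0 < dist x y := dist_pos.2 hxy
  have hxr : dist x y < r₀ := mem_ball.mp hx
  have hd8 : dist x y < 1/8 :=
    hxr.trans_le ((min_le_left _ _).trans (min_le_left _ _))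
  have hdη : dist x y < η / 4 :=
    hxr.trans_le ((min_le_left _ _).trans (min_le_right _ _))
  have hx4 : x ∈ ball (0 : E n) (1/4 : ℝ) := by
    apply hball
    exact mem_ball.2 ((mem_ball.1 hx).trans_le (min_le_right _ _))
  have hkey := (key_estimate hn u hu δ hδpos hδmono a b hyp hx4 hy hxy hd8).2
  have hδsmall : δ (4 * dist x y) < ε / K := hηsub ⟨by linarith, by linarith⟩
  have hgoal : |a x - a y - ⟪b y, x - y⟫| ≤ ε * dist x y := by
    calc |a x - a y - ⟪b y, x - y⟫| ≤ K * (dist x y * δ (4 * dist x y)) := hkey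
      _ ≤ K * (dist x y * (ε / K)) := by
          apply mul_le_mul_of_nonneg_left _ hKpos.le
          exact mul_le_mul_of_nonneg_left hδsmall.le hρ.le
      _ = ε * dist x y := by field_simp
  calc ‖a x - a y - (innerSL ℝ) (b y) (x - y)‖ = |a x - a y - ⟪b y, x - y⟫| := by
        rw [innerSL_apply_apply, Real.norm_eq_abs]
    _ ≤ ε * dist x y := hgoal
    _ = ε * ‖x - y‖ := by rw [dist_eq_norm]

lemma b_cont {n : ℕ} (hn : 1 ≤ n) (u : (E n) → ℝ)
    (hu : IntegrableOn u (ball (0 : E n) 1)) (δ : ℝ → ℝ)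
    (hδpos : ∀ r ∈ Ioo (0:ℝ) 1, 0 < δ r)
    (hδmono : ∀ r s : ℝ, 0 < r → r ≤ s → s < 1 → δ r ≤ δ s)
    (hδ0 : Tendsto δ (𝓝[>] (0:ℝ)) (𝓝 0))
    (a : (E n) → ℝ) (b : (E n) → E n)
    (hyp : ∀ xb ∈ ball (0 : E n) (1/4 : ℝ), ∀ r ∈ Ioo (0:ℝ) (1/2 : ℝ),
      ⨍ x in ball xb r, |u x - (a xb + ⟪b xb, x - xb⟫)| ≤ r * δ r) :
    ContinuousOn b (ball (0 : E n) (1/4 : ℝ)) := by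
  intro y hy
  rw [Metric.continuousWithinAt_iff]
  intro ε hε
  set K : ℝ := 4^(n+1) * (1 + 2^(n+1)) with hK_def
  have hKpos : 0 < K := by positivity
  have hmem : {t : ℝ | δ t < ε / (2 * K)} ∈ 𝓝[>] (0:ℝ) :=
    hδ0 (Iio_mem_nhds (by positivity))
  obtain ⟨η, hη, hηsub⟩ := mem_nhdsGT_iff_exists_Ioo_subset.1 hmem
  have hη0 : (0:ℝ) < η := hη
  refine ⟨min (η/4) (1/8), by positivity, ?_⟩
  intro x hx hdxy
  rcases eq_or_ne x y with rfl | hxy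
  · simpa using hε
  have hρ : 0 < dist x y := dist_pos.2 hxy
  have hd8 : dist x y < 1/8 := hdxy.trans_le (min_le_right _ _)
  have hdη : dist x y < η/4 := hdxy.trans_le (min_le_left _ _)
  have hkey := (key_estimate hn u hu δ hδpos hδmono a b hyp hx hy hxy hd8).1
  have hδsmall : δ (4 * dist x y) < ε / (2 * K) := hηsub ⟨by linarith, by linarith⟩
  have : ‖b x - b y‖ < ε := by
    calc ‖b x - b y‖ ≤ K * δ (4 * dist x y) := hkey
      _ < K * (ε / (2 * K)) := by
          exact mul_lt_mul_of_pos_left hδsmall hKpos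
      _ = ε / 2 := by field_simp
      _ < ε := by linarith
  rwa [dist_eq_norm]

lemma ae_eq_a {n : ℕ} (hn : 1 ≤ n) (u : (E n) → ℝ)
    (hu : IntegrableOn u (ball (0 : E n) 1)) (δ : ℝ → ℝ)
    (hδpos : ∀ r ∈ Ioo (0:ℝ) 1, 0 < δ r)
    (hδmono : ∀ r s : ℝ, 0 < r → r ≤ s → s < 1 → δ r ≤ δ s)
    (a : (E n) → ℝ) (b : (E n) → E n)
    (hyp : ∀ xb ∈ ball (0 : E n) (1/4 : ℝ), ∀ r ∈ Ioo (0:ℝ) (1/2 : ℝ),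
      ⨍ x in ball xb r, |u x - (a xb + ⟪b xb, x - xb⟫)| ≤ r * δ r) :
    ∀ᵐ x ∂(volume : Measure (E n)),
      x ∈ ball (0 : E n) (1/4 : ℝ) → u x = a x := by
  haveI := nontrivE hn
  set f : (E n) → ℝ := (ball (0 : E n) 1).indicator u with hf_def
  have hf_int : Integrable f := (integrable_indicator_iff measurableSet_ball).2 hu
  have hf_loc : LocallyIntegrable f := hf_int.locallyIntegrable
  filter_upwards [IsUnifLocDoublingMeasure.ae_tendsto_average_norm_sub
    (μ := (volume : Measure (E n))) hf_loc 1] with x hx hx4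
  -- specialize to fixed center x and radii r → 0
  have hmemb : ∀ᶠ r in 𝓝[>] (0:ℝ), x ∈ closedBall x (1 * r) := by
    filter_upwards [self_mem_nhdsWithin] with r hr
    rw [one_mul]
    exact mem_closedBall_self (le_of_lt hr)
  have T : Tendsto (fun r => ⨍ z in closedBall x r, ‖f z - f x‖) (𝓝[>] (0:ℝ)) (𝓝 0) :=
    hx (fun _ => x) id tendsto_id hmemb
  -- it suffices to show |u x - a x| ≤ ε for every positive ε
  suffices hsuff : ∀ ε > (0:ℝ), |u x - a x| ≤ ε by
    have h0 : |u x - a x| ≤ 0 :=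
      le_of_forall_pos_le_add (fun ε hε => by simpa using hsuff ε hε)
    have := abs_nonneg (u x - a x)
    have : |u x - a x| = 0 := le_antisymm h0 this
    have := abs_eq_zero.1 this
    linarith [this]
  intro ε hε
  have hδ14 : 0 < δ (1/4) := hδpos (1/4) (by norm_num)
  set m : ℝ := min (1/4) (min ((ε/3) / δ (1/4)) ((ε/3) / (‖b x‖ + 1))) with hm_def
  have hm : 0 < m := by
    apply lt_min (by norm_num)
    apply lt_min (by positivity) (by positivity)
  have E1 : ∀ᶠ r in 𝓝[>] (0:ℝ), r ∈ Ioo 0 m := Ioo_mem_nhdsGT_of_mem ⟨le_refl 0, hm⟩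
  have E2 : ∀ᶠ r in 𝓝[>] (0:ℝ), ⨍ z in closedBall x r, ‖f z - f x‖ < ε/3 :=
    T (Iio_mem_nhds (by positivity))
  obtain ⟨r, hr1, hr2⟩ := (E1.and E2).exists
  obtain ⟨⟨hr0, hrm⟩, havg⟩ := And.intro hr1 hr2
  have hrq : r < 1/4 := hrm.trans_le (min_le_left _ _)
  have hrδ : r < (ε/3) / δ (1/4) := hrm.trans_le ((min_le_right _ _).trans (min_le_left _ _))
  have hrb : r < (ε/3) / (‖b x‖ + 1) := hrm.trans_le ((min_le_right _ _).trans (min_le_right _ _))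
  have hx4' : dist x 0 < 1/4 := mem_ball.mp hx4
  have hsub : closedBall x r ⊆ ball (0 : E n) 1 := by
    intro z hz
    have := mem_closedBall.mp hz
    rw [mem_ball]
    calc dist z 0 ≤ dist z x + dist x 0 := dist_triangle z x 0
      _ < 1 := by linarith
  have hsub' : ball x r ⊆ ball (0 : E n) 1 := ball_subset_closedBall.trans hsub
  set V : ℝ := (volume (ball x r)).toReal with hV_def
  have hVpos : 0 < V :=
    ENNReal.toReal_pos (measure_ball_pos volume x hr0).ne' measure_ball_lt_top.ne
  have hVc : (volume (closedBall x r)).toReal = V := by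
    rw [hV_def, Measure.addHaar_closedBall_eq_addHaar_ball]
  -- integrability
  have h1 : IntegrableOn (fun z => ‖f z - f x‖) (closedBall x r) :=
    (hf_int.integrableOn.sub
      (integrableOn_const measure_closedBall_lt_top.ne)).norm
  have h1' : IntegrableOn (fun z => ‖f z - f x‖) (ball x r) :=
    h1.mono_set ball_subset_closedBall
  have h2 : IntegrableOn (fun z => |u z - (a x + ⟪b x, z - x⟫)|) (ball x r) :=
    ((hu.mono_set hsub').sub (affine_integrableOn' (a x) (b x) x x)).abs
  have h3 : IntegrableOn (fun _ : E n => ‖b x‖ * r) (ball x r) :=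
    integrableOn_const measure_ball_lt_top.ne
  -- pointwise bound
  have hpt : ∀ z ∈ ball x r,
      |u x - a x| ≤ ‖f z - f x‖ + |u z - (a x + ⟪b x, z - x⟫)| + ‖b x‖ * r := by
    intro z hz
    have hzx : ‖z - x‖ < r := by rw [← dist_eq_norm]; exact mem_ball.mp hz
    have hfz : f z = u z := indicator_of_mem (hsub' hz) u
    have hfx : f x = u x := indicator_of_mem (by rw [mem_ball]; exact lt_trans hx4' (by norm_num)) u
    have hinner : |⟪b x, z - x⟫| ≤ ‖b x‖ * r := by
      calc |⟪b x, z - x⟫| ≤ ‖b x‖ * ‖z - x‖ := abs_real_inner_le_norm _ _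
        _ ≤ ‖b x‖ * r := by nlinarith [norm_nonneg (b x)]
    have : |u x - a x| ≤ |u x - u z| + |u z - (a x + ⟪b x, z - x⟫)| + |⟪b x, z - x⟫| := by
      have e : u x - a x = (u x - u z) + (u z - (a x + ⟪b x, z - x⟫)) + ⟪b x, z - x⟫ := by ring
      rw [e]
      exact (abs_add_le _ _).trans (by gcongr; exact abs_add_le _ _)
    calc |u x - a x| ≤ |u x - u z| + |u z - (a x + ⟪b x, z - x⟫)| + |⟪b x, z - x⟫| := this
      _ = ‖f z - f x‖ + |u z - (a x + ⟪b x, z - x⟫)| + |⟪b x, z - x⟫| := by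
          rw [hfz, hfx, Real.norm_eq_abs, abs_sub_comm]
      _ ≤ ‖f z - f x‖ + |u z - (a x + ⟪b x, z - x⟫)| + ‖b x‖ * r := by linarith [hinner]
  -- integrate the pointwise bound
  have hmain : |u x - a x| * V
      ≤ (∫ z in ball x r, ‖f z - f x‖) + (∫ z in ball x r, |u z - (a x + ⟪b x, z - x⟫)|)
        + ‖b x‖ * r * V := by
    have h12 : IntegrableOn
        (fun z => ‖f z - f x‖ + |u z - (a x + ⟪b x, z - x⟫)|) (ball x r) := h1'.add h2
    have h123 : IntegrableOn
        (fun z => ‖f z - f x‖ + |u z - (a x + ⟪b x, z - x⟫)| + ‖b x‖ * r) (ball x r) :=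
      h12.add h3
    have hconst := setIntegral_ge_of_const_le_real measurableSet_ball measure_ball_lt_top.ne hpt h123
    have hsplit : ∫ z in ball x r, (‖f z - f x‖ + |u z - (a x + ⟪b x, z - x⟫)| + ‖b x‖ * r)
        = (∫ z in ball x r, ‖f z - f x‖)
          + (∫ z in ball x r, |u z - (a x + ⟪b x, z - x⟫)|) + ‖b x‖ * r * V := by
      rw [integral_add h12 h3, integral_add h1' h2, setIntegral_const, smul_eq_mul,
        measureReal_def, ← hV_def]
      ring
    rw [hsplit, measureReal_def, ← hV_def] at hconst
    linarith [hconst]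
  -- bound the three terms
  have hT1 : ∫ z in ball x r, ‖f z - f x‖ ≤ V * (ε/3) := by
    have step : ∫ z in ball x r, ‖f z - f x‖ ≤ ∫ z in closedBall x r, ‖f z - f x‖ :=
      setIntegral_mono_set h1 (Eventually.of_forall fun z => norm_nonneg _)
        (HasSubset.Subset.eventuallyLE ball_subset_closedBall)
    have heq : ∫ z in closedBall x r, ‖f z - f x‖
        = (volume (closedBall x r)).toReal * ⨍ z in closedBall x r, ‖f z - f x‖ := by
      rw [setAverage_eq, smul_eq_mul, measureReal_def]
      rw [hVc]
      field_simp
    calc ∫ z in ball x r, ‖f z - f x‖ ≤ ∫ z in closedBall x r, ‖f z - f x‖ := step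
      _ = (volume (closedBall x r)).toReal * ⨍ z in closedBall x r, ‖f z - f x‖ := heq
      _ ≤ V * (ε/3) := by
          rw [hVc]
          exact mul_le_mul_of_nonneg_left havg.le hVpos.le
  have hT2 : ∫ z in ball x r, |u z - (a x + ⟪b x, z - x⟫)| ≤ V * (ε/3) := by
    have step := setIntegral_le_of_average_le hr0 _ (hyp x hx4 r ⟨hr0, by linarith⟩)
    have hδr : δ r ≤ δ (1/4) := hδmono r (1/4) hr0 (by linarith) (by norm_num)
    have : r * δ r ≤ ε/3 := by
      have h' : r * δ (1/4) < ε/3 := by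
        rw [lt_div_iff₀ hδ14] at hrδ
        linarith
      have : r * δ r ≤ r * δ (1/4) := mul_le_mul_of_nonneg_left hδr hr0.le
      linarith
    calc ∫ z in ball x r, |u z - (a x + ⟪b x, z - x⟫)| ≤ V * (r * δ r) := step
      _ ≤ V * (ε/3) := mul_le_mul_of_nonneg_left this hVpos.le
  have hT3 : ‖b x‖ * r * V ≤ (ε/3) * V := by
    apply mul_le_mul_of_nonneg_right _ hVpos.le
    have h' : r * (‖b x‖ + 1) < ε/3 := by
      rw [lt_div_iff₀ (by positivity)] at hrb
      linarith
    nlinarith [norm_nonneg (b x)]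
  have : |u x - a x| * V ≤ ε * V := by
    calc |u x - a x| * V ≤ V * (ε/3) + V * (ε/3) + (ε/3) * V := by linarith
      _ = ε * V := by ring
  exact le_of_mul_le_mul_right (by linarith [this]) hVpos

/-- If `u` is integrable on `B₁ ⊂ ℝⁿ`, `δ : (0,1) → (0,∞)` is increasing with
`δ(r) → 0` as `r → 0`, and for every `xb ∈ B_{1/4}` there are `a(xb) ∈ ℝ`, `b(xb) ∈ ℝⁿ` with
`⨍_{B_r(xb)} |u - [a(xb) + b(xb)·(x - xb)]| ≤ r δ(r)` for all `0 < r < 1/2`, then after a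
modification on a null set `u ∈ C¹(B_{1/4})` with `u ≡ a`, `∇u ≡ b`, and
`|∇u(x) - ∇u(y)| ≤ C δ(4|x-y|)` for a dimensional constant `C`. -/
theorem c1_regularity_from_affine_approximation
    (n : ℕ) (hn : 1 ≤ n) :
    ∃ C : ℝ, 0 < C ∧
      ∀ (u : EuclideanSpace ℝ (Fin n) → ℝ),
        IntegrableOn u (ball (0 : EuclideanSpace ℝ (Fin n)) 1) →
        ∀ (δ : ℝ → ℝ),
          (∀ r ∈ Ioo (0:ℝ) 1, 0 < δ r) →
          (∀ r s : ℝ, 0 < r → r ≤ s → s < 1 → δ r ≤ δ s) →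
          Tendsto δ (𝓝[>] (0:ℝ)) (𝓝 0) →
          ∀ (a : EuclideanSpace ℝ (Fin n) → ℝ)
            (b : EuclideanSpace ℝ (Fin n) → EuclideanSpace ℝ (Fin n)),
            (∀ xb ∈ ball (0 : EuclideanSpace ℝ (Fin n)) (1/4 : ℝ), ∀ r ∈ Ioo (0:ℝ) (1/2 : ℝ),
              ⨍ x in ball xb r, |u x - (a xb + ⟪b xb, x - xb⟫)| ≤ r * δ r) →
            ∃ v : EuclideanSpace ℝ (Fin n) → ℝ,
              ContDiffOn ℝ 1 v (ball (0 : EuclideanSpace ℝ (Fin n)) (1/4 : ℝ)) ∧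
              (∀ᵐ x ∂(volume : Measure (EuclideanSpace ℝ (Fin n))),
                x ∈ ball (0 : EuclideanSpace ℝ (Fin n)) (1/4 : ℝ) → u x = v x) ∧
              (∀ xb ∈ ball (0 : EuclideanSpace ℝ (Fin n)) (1/4 : ℝ),
                v xb = a xb ∧ ∀ y : EuclideanSpace ℝ (Fin n), fderiv ℝ v xb y = ⟪b xb, y⟫) ∧
              (∀ x ∈ ball (0 : EuclideanSpace ℝ (Fin n)) (1/4 : ℝ),
                ∀ y ∈ ball (0 : EuclideanSpace ℝ (Fin n)) (1/4 : ℝ),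
                  x ≠ y → dist x y < 1/8 → ‖b x - b y‖ ≤ C * δ (4 * dist x y)) := by
  refine ⟨(1 + 4^(n+1)) * (1 + 2^(n+1)), by positivity, ?_⟩
  intro u hu δ hδpos hδmono hδ0 a b hyp
  have hdiffAt : ∀ y ∈ ball (0 : E n) (1/4 : ℝ), HasFDerivAt a ((innerSL ℝ) (b y)) y :=
    fun y hy => hasFDeriv_a hn u hu δ hδpos hδmono hδ0 a b hyp hy
  refine ⟨a, ?_, ?_, ?_, ?_⟩
  · -- C¹ regularity
    have h01 : (1 : WithTop ℕ∞) = 0 + 1 := by norm_num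
    rw [h01]
    refine (contDiffOn_succ_iff_fderiv_of_isOpen isOpen_ball).2 ⟨?_, by simp, ?_⟩
    · exact fun y hy => ((hdiffAt y hy).differentiableAt).differentiableWithinAt
    · rw [contDiffOn_zero]
      have hbc : ContinuousOn b (ball (0 : E n) (1/4 : ℝ)) :=
        b_cont hn u hu δ hδpos hδmono hδ0 a b hyp
      have hc : ContinuousOn (fun x => (innerSL ℝ) (b x)) (ball (0 : E n) (1/4 : ℝ)) :=
        (innerSL ℝ).continuous.comp_continuousOn hbc
      exact hc.congr fun x hx => (hdiffAt x hx).fderiv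
  · exact ae_eq_a hn u hu δ hδpos hδmono a b hyp
  · intro xb hxb
    refine ⟨rfl, fun y => ?_⟩
    rw [(hdiffAt xb hxb).fderiv]
    rfl
  · intro x hx y hy hxy hd
    have hkey := (key_estimate hn u hu δ hδpos hδmono a b hyp hx hy hxy hd).1
    have hρ : 0 < dist x y := dist_pos.2 hxy
    have hδ4 : 0 < δ (4 * dist x y) := hδpos _ ⟨by linarith, by linarith⟩
    have hC : (4:ℝ)^(n+1) * (1 + 2^(n+1)) ≤ (1 + 4^(n+1)) * (1 + 2^(n+1)) := by
      have : (0:ℝ) < 1 + 2^(n+1) := by positivity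
      nlinarith
    calc ‖b x - b y‖ ≤ 4^(n+1) * (1 + 2^(n+1)) * δ (4 * dist x y) := hkey
      _ ≤ (1 + 4^(n+1)) * (1 + 2^(n+1)) * δ (4 * dist x y) :=
          mul_le_mul_of_nonneg_right hC hδ4.le
end

section
/- Let u : B_1 → ℝ (B_1 ⊂ ℝⁿ, n ≥ 1) and let δ : (0,1) → (0,∞) be monotonically increasing with lim_{r→0} δ(r) = 0. Assume that for every x̄ ∈ B_{1/4} there is b(x̄) ∈ ℝⁿ such that ⨍_{B_r(x̄)} |u(x) − [u(x̄) + b(x̄)·(x − x̄)]| dx ≤ r δ(r) for all 0 < r < 1/2. Then there is a dimensional constant C such that for all x̄, ȳ ∈ B_{1/4} with 0 < |x̄ − ȳ| < 1/8, |u(ȳ) − [u(x̄) + b(x̄)·(ȳ − x̄)]| ≤ C |ȳ − x̄| δ(4|ȳ − x̄|). -/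
open MeasureTheory Metric Set Filter
open scoped Topology RealInnerProductSpace

section Aux

variable {n : ℕ}

private lemma cont_intOn {f : EuclideanSpace ℝ (Fin n) → ℝ} (hf : Continuous f)
    (c : EuclideanSpace ℝ (Fin n)) (r : ℝ) : IntegrableOn f (ball c r) :=
  (hf.locallyIntegrable.integrableOn_isCompact (isCompact_closedBall c r)).mono_set
    ball_subset_closedBall

private lemma inner_ball_integral_zero (yb d : EuclideanSpace ℝ (Fin n)) (ρ : ℝ) :
    ∫ x in ball yb ρ, ⟪d, x - yb⟫ = 0 := by
  have hmp : MeasurePreserving (fun x : EuclideanSpace ℝ (Fin n) => yb + yb - x)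
      volume volume := Measure.measurePreserving_sub_left volume (yb + yb)
  have hemb : MeasurableEmbedding (fun x : EuclideanSpace ℝ (Fin n) => yb + yb - x) :=
    (MeasurableEquiv.subLeft (yb + yb)).measurableEmbedding
  have hpre : (fun x : EuclideanSpace ℝ (Fin n) => yb + yb - x) ⁻¹' ball yb ρ = ball yb ρ := by
    ext z
    simp only [mem_preimage, mem_ball, dist_eq_norm]
    rw [show yb + yb - z - yb = -(z - yb) by abel, norm_neg]
  have key := hmp.setIntegral_preimage_emb hemb
    (fun x => ⟪d, x - yb⟫) (ball yb ρ)
  rw [hpre] at key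
  have h2 : ∀ x : EuclideanSpace ℝ (Fin n), ⟪d, yb + yb - x - yb⟫ = -⟪d, x - yb⟫ := by
    intro x
    rw [show yb + yb - x - yb = -(x - yb) by abel, inner_neg_right]
  simp only [h2, integral_neg] at key
  linarith

end Aux

/-- If `u` is integrable on `B₁ ⊂ ℝⁿ`, `δ : (0,1) → (0,∞)` is increasing with
`δ(r) → 0` as `r → 0`, and for every `xb ∈ B_{1/4}` there is `b(xb) ∈ ℝⁿ` with
`⨍_{B_r(xb)} |u(x) - [u(xb) + b(xb)·(x - xb)]| ≤ r δ(r)` for all `0 < r < 1/2`, then for a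
dimensional constant `C`, for all `xb, yb ∈ B_{1/4}` with `0 < |xb - yb| < 1/8`,
`|u(yb) - [u(xb) + b(xb)·(yb - xb)]| ≤ C |yb - xb| δ(4|yb - xb|)`. -/
theorem first_order_taylor_estimate_from_affine_approximation
    (n : ℕ) (hn : 1 ≤ n) :
    ∃ C : ℝ, 0 < C ∧
      ∀ (u : EuclideanSpace ℝ (Fin n) → ℝ),
        IntegrableOn u (ball (0 : EuclideanSpace ℝ (Fin n)) 1) →
        ∀ (δ : ℝ → ℝ),
          (∀ r ∈ Ioo (0:ℝ) 1, 0 < δ r) →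
          (∀ r s : ℝ, 0 < r → r ≤ s → s < 1 → δ r ≤ δ s) →
          Tendsto δ (𝓝[>] (0:ℝ)) (𝓝 0) →
          ∀ (b : EuclideanSpace ℝ (Fin n) → EuclideanSpace ℝ (Fin n)),
            (∀ xb ∈ ball (0 : EuclideanSpace ℝ (Fin n)) (1/4 : ℝ), ∀ r ∈ Ioo (0:ℝ) (1/2 : ℝ),
              ⨍ x in ball xb r, |u x - (u xb + ⟪b xb, x - xb⟫)| ≤ r * δ r) →
            ∀ xb ∈ ball (0 : EuclideanSpace ℝ (Fin n)) (1/4 : ℝ),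
              ∀ yb ∈ ball (0 : EuclideanSpace ℝ (Fin n)) (1/4 : ℝ),
                xb ≠ yb → dist xb yb < 1/8 →
                  |u yb - (u xb + ⟪b xb, yb - xb⟫)| ≤ C * dist yb xb * δ (4 * dist yb xb) := by
  refine ⟨2 ^ (n + 1) + 1, by positivity, ?_⟩
  intro u hu δ hδpos hδmono _hδlim b hb xb hxb yb hyb hxy hd
  haveI : Nontrivial (EuclideanSpace ℝ (Fin n)) := by
    refine ⟨EuclideanSpace.single (⟨0, hn⟩ : Fin n) (1 : ℝ), 0, ?_⟩
    intro h
    have := congrArg (fun v : EuclideanSpace ℝ (Fin n) => v (⟨0, hn⟩ : Fin n)) h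
    simp [EuclideanSpace.single] at this
  set ρ : ℝ := dist yb xb with hρdef
  have hρ : 0 < ρ := dist_pos.mpr (Ne.symm hxy)
  have hρ8 : ρ < 1/8 := by rw [hρdef, dist_comm]; exact hd
  rw [mem_ball] at hxb hyb
  -- subsets
  have hsub1 : ball yb ρ ⊆ ball xb (2 * ρ) := by
    intro z hz
    rw [mem_ball] at hz ⊢
    calc dist z xb ≤ dist z yb + dist yb xb := dist_triangle _ _ _
      _ < 2 * ρ := by rw [← hρdef]; linarith
  have hsub2 : ball xb (2 * ρ) ⊆ ball 0 1 := by
    intro z hz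
    rw [mem_ball] at hz ⊢
    calc dist z 0 ≤ dist z xb + dist xb 0 := dist_triangle _ _ _
      _ < 1 := by linarith
  -- functions
  set w : EuclideanSpace ℝ (Fin n) → ℝ := fun x => u x - (u xb + ⟪b xb, x - xb⟫) with hw
  set v : EuclideanSpace ℝ (Fin n) → ℝ := fun x => u x - (u yb + ⟪b yb, x - yb⟫) with hv
  set a : EuclideanSpace ℝ (Fin n) → ℝ := fun x => w yb + ⟪b yb - b xb, x - yb⟫ with ha
  have hav : ∀ x, a x = w x - v x := by
    intro x
    simp only [ha, hw, hv, inner_sub_left, inner_sub_right]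
    ring
  -- continuity / integrability
  have hcx : Continuous fun x : EuclideanSpace ℝ (Fin n) => u xb + ⟪b xb, x - xb⟫ :=
    continuous_const.add (continuous_const.inner (continuous_id.sub continuous_const))
  have hcy : Continuous fun x : EuclideanSpace ℝ (Fin n) => u yb + ⟪b yb, x - yb⟫ :=
    continuous_const.add (continuous_const.inner (continuous_id.sub continuous_const))
  have hca : Continuous a :=
    continuous_const.add (continuous_const.inner (continuous_id.sub continuous_const))
  have hu2 : IntegrableOn u (ball xb (2 * ρ)) := hu.mono_set hsub2
  have hu1 : IntegrableOn u (ball yb ρ) := hu2.mono_set hsub1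
  have hw2 : IntegrableOn w (ball xb (2 * ρ)) := hu2.sub (cont_intOn hcx _ _)
  have hw1 : IntegrableOn w (ball yb ρ) := hw2.mono_set hsub1
  have hv1 : IntegrableOn v (ball yb ρ) := hu1.sub (cont_intOn hcy _ _)
  have ha1 : IntegrableOn a (ball yb ρ) := cont_intOn hca _ _
  -- measures
  set m1 : ℝ := (volume (ball yb ρ)).toReal with hm1
  set m2 : ℝ := (volume (ball xb (2 * ρ))).toReal with hm2
  have hm1pos : 0 < m1 :=
    ENNReal.toReal_pos (measure_ball_pos volume yb hρ).ne' (measure_ball_lt_top).ne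
  have hm2pos : 0 < m2 :=
    ENNReal.toReal_pos (measure_ball_pos volume xb (by linarith)).ne' (measure_ball_lt_top).ne
  have hmeq : m2 = 2 ^ n * m1 := by
    have e1 : volume (ball yb ρ) =
        ENNReal.ofReal (ρ ^ Module.finrank ℝ (EuclideanSpace ℝ (Fin n))) * volume
          (ball (0 : EuclideanSpace ℝ (Fin n)) 1) :=
      Measure.addHaar_ball volume yb hρ.le
    have e2 : volume (ball xb (2 * ρ)) =
        ENNReal.ofReal ((2 * ρ) ^ Module.finrank ℝ (EuclideanSpace ℝ (Fin n))) * volume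
          (ball (0 : EuclideanSpace ℝ (Fin n)) 1) :=
      Measure.addHaar_ball volume xb (by linarith)
    rw [hm1, hm2, e1, e2, ENNReal.toReal_mul, ENNReal.toReal_mul,
      ENNReal.toReal_ofReal (by positivity), ENNReal.toReal_ofReal (by positivity),
      finrank_euclideanSpace_fin]
    ring
  -- hypothesis as integral bounds
  have h1 : ∫ x in ball xb (2 * ρ), |w x| ≤ m2 * (2 * ρ * δ (2 * ρ)) := by
    have := hb xb (mem_ball.mpr hxb) (2 * ρ) ⟨by linarith, by linarith⟩
    rw [setAverage_eq, smul_eq_mul, measureReal_def, ← hm2, inv_mul_le_iff₀ hm2pos] at this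
    exact this
  have h2 : ∫ x in ball yb ρ, |v x| ≤ m1 * (ρ * δ ρ) := by
    have := hb yb (mem_ball.mpr hyb) ρ ⟨hρ, by linarith⟩
    rw [setAverage_eq, smul_eq_mul, measureReal_def, ← hm1, inv_mul_le_iff₀ hm1pos] at this
    exact this
  -- integral of a
  have hinta : ∫ x in ball yb ρ, a x = m1 * w yb := by
    rw [ha]
    have hci : Continuous fun x : EuclideanSpace ℝ (Fin n) => ⟪b yb - b xb, x - yb⟫ :=
      continuous_const.inner (continuous_id.sub continuous_const)
    rw [integral_add (integrableOn_const (C := w yb) measure_ball_lt_top.ne enorm_ne_top)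
      (cont_intOn hci _ _)]
    rw [inner_ball_integral_zero, setIntegral_const, smul_eq_mul, add_zero, hm1, measureReal_def]
  -- chain
  have step1 : m1 * |w yb| ≤ ∫ x in ball yb ρ, |a x| := by
    have h := norm_integral_le_integral_norm (μ := volume.restrict (ball yb ρ)) a
    rw [hinta] at h
    simp only [Real.norm_eq_abs] at h
    calc m1 * |w yb| = |m1 * w yb| := by rw [abs_mul, abs_of_nonneg hm1pos.le]
      _ ≤ _ := h
  have step2 : ∫ x in ball yb ρ, |a x| ≤
      (∫ x in ball yb ρ, |w x|) + ∫ x in ball yb ρ, |v x| := by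
    rw [← integral_add hw1.abs hv1.abs]
    refine integral_mono ha1.abs (hw1.abs.add hv1.abs) fun x => ?_
    simp only [Pi.add_apply]
    calc |a x| = |w x - v x| := by rw [hav x]
      _ ≤ |w x| + |v x| := abs_sub _ _
  have step3 : ∫ x in ball yb ρ, |w x| ≤ ∫ x in ball xb (2 * ρ), |w x| :=
    setIntegral_mono_set hw2.abs (Eventually.of_forall fun x => abs_nonneg _)
      (HasSubset.Subset.eventuallyLE hsub1)
  -- combine
  have key : m1 * |w yb| ≤ m1 * ((2 ^ n * (2 * ρ * δ (2 * ρ))) + ρ * δ ρ) := by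
    calc m1 * |w yb| ≤ (∫ x in ball yb ρ, |w x|) + ∫ x in ball yb ρ, |v x| :=
          le_trans step1 step2
      _ ≤ m2 * (2 * ρ * δ (2 * ρ)) + m1 * (ρ * δ ρ) :=
          add_le_add (le_trans step3 h1) h2
      _ = m1 * ((2 ^ n * (2 * ρ * δ (2 * ρ))) + ρ * δ ρ) := by rw [hmeq]; ring
  have hmain : |w yb| ≤ 2 ^ n * (2 * ρ * δ (2 * ρ)) + ρ * δ ρ :=
    le_of_mul_le_mul_left key hm1pos
  -- monotonicity of δ
  have hd1 : δ (2 * ρ) ≤ δ (4 * ρ) := hδmono _ _ (by linarith) (by linarith) (by linarith)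
  have hd2 : δ ρ ≤ δ (4 * ρ) := hδmono _ _ hρ (by linarith) (by linarith)
  have hd4 : 0 < δ (4 * ρ) := hδpos _ ⟨by linarith, by linarith⟩
  have hpow : (0:ℝ) < 2 ^ n := by positivity
  show |w yb| ≤ (2 ^ (n + 1) + 1) * ρ * δ (4 * ρ)
  have hfin : 2 ^ n * (2 * ρ * δ (2 * ρ)) + ρ * δ ρ ≤ (2 ^ (n + 1) + 1) * ρ * δ (4 * ρ) := by
    have e : (2:ℝ) ^ (n + 1) = 2 * 2 ^ n := by ring
    rw [e]
    nlinarith [mul_le_mul_of_nonneg_left hd1 (by positivity : (0:ℝ) ≤ 2 ^ n * (2 * ρ)),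
      mul_le_mul_of_nonneg_left hd2 hρ.le]
  linarith
end

section
/- Let u : B_1 → ℝ (B_1 ⊂ ℝⁿ, n ≥ 1) and let δ : (0,1) → (0,∞) be monotonically increasing with lim_{r→0} δ(r) = 0. Assume that for every x̄ ∈ B_{1/4} there is b(x̄) ∈ ℝⁿ such that ⨍_{B_r(x̄)} |u(x) − [u(x̄) + b(x̄)·(x − x̄)]| dx ≤ r δ(r) for all 0 < r < 1/2. Then there is a dimensional constant C such that for all x̄, ȳ ∈ B_{1/4} with 0 < |x̄ − ȳ| < 1/8, |b(x̄) − b(ȳ)| ≤ 2C δ(4|x̄ − ȳ|). -/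
open MeasureTheory Metric Set Filter
open scoped Topology RealInnerProductSpace

namespace GradOsc

noncomputable def G (n : ℕ) (b : EuclideanSpace ℝ (Fin n)) : ℝ :=
  ∫ x in ball (0 : EuclideanSpace ℝ (Fin n)) 1, |⟪b, x⟫|

lemma integrableOn_ball_of_continuous {n : ℕ} {f : EuclideanSpace ℝ (Fin n) → ℝ}
    (hf : Continuous f) (y : EuclideanSpace ℝ (Fin n)) (r : ℝ) :
    IntegrableOn f (ball y r) :=
  ((hf.continuousOn).integrableOn_compact (isCompact_closedBall y r)).mono_set
    ball_subset_closedBall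

lemma cont_inner_abs {n : ℕ} (b : EuclideanSpace ℝ (Fin n)) :
    Continuous fun x : EuclideanSpace ℝ (Fin n) => |⟪b, x⟫| :=
  (continuous_const.inner continuous_id).abs

lemma G_smul {n : ℕ} (t : ℝ) (b : EuclideanSpace ℝ (Fin n)) : G n (t • b) = |t| * G n b := by
  unfold G
  simp_rw [real_inner_smul_left, abs_mul]
  exact integral_const_mul _ _

lemma G_cont (n : ℕ) : Continuous (G n) := by
  set V : ℝ := (volume (ball (0 : EuclideanSpace ℝ (Fin n)) 1)).toReal with hV
  have key : ∀ b b' : EuclideanSpace ℝ (Fin n), G n b - G n b' ≤ V * ‖b - b'‖ := by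
    intro b b'
    have h1 := integrableOn_ball_of_continuous (cont_inner_abs b) (0 : EuclideanSpace ℝ (Fin n)) 1
    have h2 := integrableOn_ball_of_continuous (cont_inner_abs b') (0 : EuclideanSpace ℝ (Fin n)) 1
    rw [G, G, ← integral_sub h1 h2]
    have hub : ∀ x ∈ ball (0 : EuclideanSpace ℝ (Fin n)) 1,
        |⟪b, x⟫| - |⟪b', x⟫| ≤ ‖b - b'‖ := by
      intro x hx
      have h3 : |⟪b, x⟫| - |⟪b', x⟫| ≤ |⟪b, x⟫ - ⟪b', x⟫| := abs_sub_abs_le_abs_sub _ _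
      have h4 : ⟪b, x⟫ - ⟪b', x⟫ = ⟪b - b', x⟫ := (inner_sub_left _ _ _).symm
      have h5 : |⟪b - b', x⟫| ≤ ‖b - b'‖ * ‖x‖ := abs_real_inner_le_norm _ _
      have h6 : ‖x‖ ≤ 1 := le_of_lt (by simpa [dist_eq_norm] using hx)
      rw [h4] at h3
      nlinarith [norm_nonneg (b - b')]
    calc ∫ x in ball (0 : EuclideanSpace ℝ (Fin n)) 1, (|⟪b, x⟫| - |⟪b', x⟫|)
        ≤ ∫ _x in ball (0 : EuclideanSpace ℝ (Fin n)) 1, ‖b - b'‖ :=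
          setIntegral_mono_on (h1.sub h2)
            (integrableOn_const measure_ball_lt_top.ne) measurableSet_ball hub
      _ = V * ‖b - b'‖ := by rw [setIntegral_const, smul_eq_mul, measureReal_def]
  have hlip : LipschitzWith (Real.toNNReal V) (G n) := by
    refine LipschitzWith.of_dist_le_mul fun b b' => ?_
    rw [Real.dist_eq, Real.coe_toNNReal _ ENNReal.toReal_nonneg, dist_eq_norm]
    exact abs_sub_le_iff.mpr ⟨key b b', by simpa [norm_sub_rev] using key b' b⟩
  exact hlip.continuous

lemma G_pos {n : ℕ} {b : EuclideanSpace ℝ (Fin n)} (hb : b ≠ 0) : 0 < G n b := by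
  rw [G, setIntegral_pos_iff_support_of_nonneg_ae]
  · set U : Set (EuclideanSpace ℝ (Fin n)) :=
      {x | ⟪b, x⟫ ≠ 0} ∩ ball (0 : EuclideanSpace ℝ (Fin n)) 1 with hU
    have hUopen : IsOpen U :=
      (isOpen_ne.preimage (continuous_const.inner continuous_id)).inter isOpen_ball
    have hbnorm : 0 < ‖b‖ := norm_pos_iff.mpr hb
    have hx₀ : (2 * ‖b‖)⁻¹ • b ∈ U := by
      constructor
      · have : ⟪b, (2 * ‖b‖)⁻¹ • b⟫ = (2 * ‖b‖)⁻¹ * ‖b‖ ^ 2 := by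
          rw [real_inner_smul_right, real_inner_self_eq_norm_sq]
        simp only [Set.mem_setOf_eq, this]
        positivity
      · rw [mem_ball, dist_zero_right, norm_smul]
        have : ‖(2 * ‖b‖)⁻¹‖ = (2 * ‖b‖)⁻¹ := by
          rw [Real.norm_eq_abs, abs_of_pos]; positivity
        rw [this]
        have h7 : (2 * ‖b‖)⁻¹ * ‖b‖ = 1 / 2 := by field_simp
        rw [h7]; norm_num
    obtain ⟨ε, hε, hball⟩ := Metric.mem_nhds_iff.mp (hUopen.mem_nhds hx₀)
    have hsub : ball ((2 * ‖b‖)⁻¹ • b) ε ⊆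
        (Function.support fun x => |⟪b, x⟫|) ∩ ball (0 : EuclideanSpace ℝ (Fin n)) 1 := by
      intro x hx
      obtain ⟨h1, h2⟩ := hball hx
      exact ⟨by simpa [Function.mem_support, abs_eq_zero] using h1, h2⟩
    calc (0 : ENNReal) < volume (ball ((2 * ‖b‖)⁻¹ • b) ε) := measure_ball_pos _ _ hε
      _ ≤ _ := measure_mono hsub
  · filter_upwards with x using abs_nonneg _
  · exact integrableOn_ball_of_continuous (cont_inner_abs b) _ _

lemma exists_kappa (n : ℕ) (hn : 1 ≤ n) :
    ∃ κ : ℝ, 0 < κ ∧ ∀ b : EuclideanSpace ℝ (Fin n), κ * ‖b‖ ≤ G n b := by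
  have hne : (sphere (0 : EuclideanSpace ℝ (Fin n)) 1).Nonempty :=
    ⟨EuclideanSpace.single ⟨0, hn⟩ (1 : ℝ), by simp [EuclideanSpace.norm_single]⟩
  obtain ⟨b₀, hb₀mem, hb₀min⟩ :=
    (isCompact_sphere (0 : EuclideanSpace ℝ (Fin n)) 1).exists_isMinOn hne (G_cont n).continuousOn
  have hb₀norm : ‖b₀‖ = 1 := by simpa [mem_sphere_iff_norm] using hb₀mem
  have hb₀ne : b₀ ≠ 0 := by intro h; rw [h] at hb₀norm; simp at hb₀norm
  refine ⟨G n b₀, G_pos hb₀ne, fun b => ?_⟩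
  rcases eq_or_ne b 0 with rfl | hb
  · simp [G]
  · have hbn : 0 < ‖b‖ := norm_pos_iff.mpr hb
    have hmem : ‖b‖⁻¹ • b ∈ sphere (0 : EuclideanSpace ℝ (Fin n)) 1 := by
      simp [mem_sphere_iff_norm, norm_smul, abs_of_pos (inv_pos.mpr hbn),
        inv_mul_cancel₀ hbn.ne']
    have h1 : G n b₀ ≤ G n (‖b‖⁻¹ • b) := hb₀min hmem
    rw [G_smul, abs_of_pos (inv_pos.mpr hbn)] at h1
    calc G n b₀ * ‖b‖ ≤ ‖b‖⁻¹ * G n b * ‖b‖ := by nlinarith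
      _ = G n b := by field_simp

lemma setIntegral_ball_translate {n : ℕ} (y : EuclideanSpace ℝ (Fin n)) (r : ℝ)
    (g : EuclideanSpace ℝ (Fin n) → ℝ) :
    ∫ x in ball y r, g (x - y) = ∫ x in ball (0 : EuclideanSpace ℝ (Fin n)) r, g x := by
  have hpre : (fun x : EuclideanSpace ℝ (Fin n) => x + y) ⁻¹' ball y r
      = ball (0 : EuclideanSpace ℝ (Fin n)) r := by
    ext x; simp [mem_ball, dist_eq_norm]
  have h := (measurePreserving_add_right (volume : Measure (EuclideanSpace ℝ (Fin n))) y)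
      |>.setIntegral_preimage_emb (MeasurableEquiv.addRight y).measurableEmbedding
      (fun x => g (x - y)) (ball y r)
  rw [hpre] at h
  rw [← h]
  simp

lemma setIntegral_ball_neg {n : ℕ} (r : ℝ) (g : EuclideanSpace ℝ (Fin n) → ℝ) :
    ∫ x in ball (0 : EuclideanSpace ℝ (Fin n)) r, g (-x)
      = ∫ x in ball (0 : EuclideanSpace ℝ (Fin n)) r, g x := by
  have hpre : (fun x : EuclideanSpace ℝ (Fin n) => -x) ⁻¹' ball (0 : EuclideanSpace ℝ (Fin n)) r
      = ball (0 : EuclideanSpace ℝ (Fin n)) r := by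
    ext x; simp [mem_ball, dist_eq_norm]
  have h := (Measure.measurePreserving_neg (volume : Measure (EuclideanSpace ℝ (Fin n))))
      |>.setIntegral_preimage_emb (MeasurableEquiv.neg _).measurableEmbedding
      g (ball (0 : EuclideanSpace ℝ (Fin n)) r)
  rw [hpre] at h
  exact h

lemma setIntegral_ball_inner_scale {n : ℕ} (b : EuclideanSpace ℝ (Fin n)) {r : ℝ} (hr : 0 < r) :
    ∫ x in ball (0 : EuclideanSpace ℝ (Fin n)) r, |⟪b, x⟫| = r ^ n * (r * G n b) := by
  have h := Measure.setIntegral_comp_smul_of_pos (volume : Measure (EuclideanSpace ℝ (Fin n)))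
      (fun x => |⟪b, x⟫|) (ball (0 : EuclideanSpace ℝ (Fin n)) 1) hr
  rw [smul_unitBall_of_pos hr, finrank_euclideanSpace_fin] at h
  have h2 : ∀ x : EuclideanSpace ℝ (Fin n), |⟪b, r • x⟫| = r * |⟪b, x⟫| := by
    intro x
    rw [real_inner_smul_right, abs_mul, abs_of_pos hr]
  simp_rw [h2] at h
  rw [integral_const_mul] at h
  rw [smul_eq_mul] at h
  have hrn : (0 : ℝ) < r ^ n := by positivity
  rw [G]
  field_simp at h ⊢
  nlinarith [h]

lemma measure_ball_toReal {n : ℕ} (hn : 1 ≤ n) (y : EuclideanSpace ℝ (Fin n)) {r : ℝ}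
    (hr : 0 ≤ r) :
    (volume (ball y r)).toReal
      = r ^ n * (volume (ball (0 : EuclideanSpace ℝ (Fin n)) 1)).toReal := by
  haveI : Nontrivial (EuclideanSpace ℝ (Fin n)) := by
    refine nontrivial_of_ne (EuclideanSpace.single ⟨0, hn⟩ (1 : ℝ)) 0 ?_
    intro h
    have := congrArg norm h
    simp [EuclideanSpace.norm_single] at this
  rw [Measure.addHaar_ball volume y hr, finrank_euclideanSpace_fin, ENNReal.toReal_mul,
    ENNReal.toReal_ofReal (by positivity)]

lemma affine_avg_lower (n : ℕ) (hn : 1 ≤ n) :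
    ∃ κ : ℝ, 0 < κ ∧ ∀ (b : EuclideanSpace ℝ (Fin n)) (c : ℝ) (y : EuclideanSpace ℝ (Fin n))
      (r : ℝ), 0 < r →
      κ * (‖b‖ * r) ≤ ⨍ x in ball y r, |c + ⟪b, x - y⟫| := by
  obtain ⟨κ₀, hκ₀, hκ⟩ := exists_kappa n hn
  set V : ℝ := (volume (ball (0 : EuclideanSpace ℝ (Fin n)) 1)).toReal with hV
  have hVpos : 0 < V :=
    ENNReal.toReal_pos (measure_ball_pos _ _ one_pos).ne' measure_ball_lt_top.ne
  refine ⟨κ₀ / V, by positivity, fun b c y r hr => ?_⟩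
  have T : ∫ x in ball y r, |c + ⟪b, x - y⟫|
      = ∫ x in ball (0 : EuclideanSpace ℝ (Fin n)) r, |c + ⟪b, x⟫| :=
    setIntegral_ball_translate y r (fun z => |c + ⟪b, z⟫|)
  have N : ∫ x in ball (0 : EuclideanSpace ℝ (Fin n)) r, |c - ⟪b, x⟫|
      = ∫ x in ball (0 : EuclideanSpace ℝ (Fin n)) r, |c + ⟪b, x⟫| := by
    have h := setIntegral_ball_neg r (fun z => |c + ⟪b, z⟫|)
    simp only [inner_neg_right] at h
    simp only [← sub_eq_add_neg] at h
    exact h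
  have I1 : IntegrableOn (fun x : EuclideanSpace ℝ (Fin n) => |c + ⟪b, x⟫|)
      (ball (0 : EuclideanSpace ℝ (Fin n)) r) :=
    integrableOn_ball_of_continuous
      ((continuous_const.add (continuous_const.inner continuous_id)).abs) _ _
  have I2 : IntegrableOn (fun x : EuclideanSpace ℝ (Fin n) => |c - ⟪b, x⟫|)
      (ball (0 : EuclideanSpace ℝ (Fin n)) r) :=
    integrableOn_ball_of_continuous
      ((continuous_const.sub (continuous_const.inner continuous_id)).abs) _ _
  have I3 : IntegrableOn (fun x : EuclideanSpace ℝ (Fin n) => |⟪b, x⟫|)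
      (ball (0 : EuclideanSpace ℝ (Fin n)) r) :=
    integrableOn_ball_of_continuous (cont_inner_abs b) _ _
  have S : ∫ x in ball (0 : EuclideanSpace ℝ (Fin n)) r, |⟪b, x⟫|
      ≤ ∫ x in ball (0 : EuclideanSpace ℝ (Fin n)) r, |c + ⟪b, x⟫| := by
    have hpt : ∀ x ∈ ball (0 : EuclideanSpace ℝ (Fin n)) r,
        (2 : ℝ) * |⟪b, x⟫| ≤ |c + ⟪b, x⟫| + |c - ⟪b, x⟫| := by
      intro x _
      have := abs_sub (c + ⟪b, x⟫) (c - ⟪b, x⟫)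
      have he : (c + ⟪b, x⟫) - (c - ⟪b, x⟫) = 2 * ⟪b, x⟫ := by ring
      rw [he, abs_mul] at this
      simpa using this
    have hmono : ∫ x in ball (0 : EuclideanSpace ℝ (Fin n)) r, (2 : ℝ) * |⟪b, x⟫|
        ≤ ∫ x in ball (0 : EuclideanSpace ℝ (Fin n)) r, (|c + ⟪b, x⟫| + |c - ⟪b, x⟫|) :=
      setIntegral_mono_on (I3.const_mul 2) (I1.add I2) measurableSet_ball hpt
    rw [integral_const_mul, integral_add I1 I2, N] at hmono
    linarith
  have Sc := setIntegral_ball_inner_scale b hr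
  have hmb : (volume (ball y r)).toReal = r ^ n * V := measure_ball_toReal hn y hr.le
  rw [setAverage_eq, smul_eq_mul, T, measureReal_def, hmb]
  have hlow : r ^ n * (r * (κ₀ * ‖b‖)) ≤ ∫ x in ball (0 : EuclideanSpace ℝ (Fin n)) r,
      |c + ⟪b, x⟫| := by
    refine le_trans ?_ S
    rw [Sc]
    exact mul_le_mul_of_nonneg_left (mul_le_mul_of_nonneg_left (hκ b) hr.le)
      (by positivity)
  calc κ₀ / V * (‖b‖ * r) = (r ^ n * V)⁻¹ * (r ^ n * (r * (κ₀ * ‖b‖))) := by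
        field_simp
    _ ≤ (r ^ n * V)⁻¹ * ∫ x in ball (0 : EuclideanSpace ℝ (Fin n)) r, |c + ⟪b, x⟫| := by
        have h0 : (0 : ℝ) ≤ (r ^ n * V)⁻¹ := by positivity
        exact mul_le_mul_of_nonneg_left hlow h0

end GradOsc

set_option maxHeartbeats 1600000 in
/-- If `u` is integrable on `B₁ ⊂ ℝⁿ`, `δ : (0,1) → (0,∞)` is increasing with
`δ(r) → 0` as `r → 0`, and for every `xb ∈ B_{1/4}` there is `b(xb) ∈ ℝⁿ` with
`⨍_{B_r(xb)} |u(x) - [u(xb) + b(xb)·(x - xb)]| ≤ r δ(r)` for all `0 < r < 1/2`, then for a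
dimensional constant `C`, for all `xb, yb ∈ B_{1/4}` with `0 < |xb - yb| < 1/8`,
`|b(xb) - b(yb)| ≤ 2C δ(4|xb - yb|)`. -/
theorem gradient_oscillation_estimate_from_affine_approximation
    (n : ℕ) (hn : 1 ≤ n) :
    ∃ C : ℝ, 0 < C ∧
      ∀ (u : EuclideanSpace ℝ (Fin n) → ℝ),
        IntegrableOn u (ball (0 : EuclideanSpace ℝ (Fin n)) 1) →
        ∀ (δ : ℝ → ℝ),
          (∀ r ∈ Ioo (0:ℝ) 1, 0 < δ r) →
          (∀ r s : ℝ, 0 < r → r ≤ s → s < 1 → δ r ≤ δ s) →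
          Tendsto δ (𝓝[>] (0:ℝ)) (𝓝 0) →
          ∀ (b : EuclideanSpace ℝ (Fin n) → EuclideanSpace ℝ (Fin n)),
            (∀ xb ∈ ball (0 : EuclideanSpace ℝ (Fin n)) (1/4 : ℝ), ∀ r ∈ Ioo (0:ℝ) (1/2 : ℝ),
              ⨍ x in ball xb r, |u x - (u xb + ⟪b xb, x - xb⟫)| ≤ r * δ r) →
            ∀ xb ∈ ball (0 : EuclideanSpace ℝ (Fin n)) (1/4 : ℝ),
              ∀ yb ∈ ball (0 : EuclideanSpace ℝ (Fin n)) (1/4 : ℝ),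
                xb ≠ yb → dist xb yb < 1/8 →
                  ‖b xb - b yb‖ ≤ 2 * C * δ (4 * dist xb yb) := by
  obtain ⟨κ, hκpos, hκ⟩ := GradOsc.affine_avg_lower n hn
  set V : ℝ := (volume (ball (0 : EuclideanSpace ℝ (Fin n)) 1)).toReal with hV
  have hVpos : 0 < V :=
    ENNReal.toReal_pos (measure_ball_pos _ _ one_pos).ne' measure_ball_lt_top.ne
  refine ⟨(2 ^ (n + 1) + 1) / κ, by positivity, ?_⟩
  intro u hu δ hδpos hδmono _hδlim b hb xb hxb yb hyb hne hdist
  set r : ℝ := dist xb yb with hrdef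
  have hr0 : 0 < r := dist_pos.mpr hne
  have hr8 : r < 1 / 8 := hdist
  have hy1 : ⨍ x in ball yb r, |u x - (u yb + ⟪b yb, x - yb⟫)| ≤ r * δ r :=
    hb yb hyb r ⟨hr0, by linarith⟩
  have hx2 : ⨍ x in ball xb (2 * r), |u x - (u xb + ⟪b xb, x - xb⟫)| ≤ (2 * r) * δ (2 * r) :=
    hb xb hxb (2 * r) ⟨by linarith, by linarith⟩
  have hball1 : ball yb r ⊆ ball xb (2 * r) := by
    intro z hz
    rw [mem_ball] at hz ⊢
    have h := dist_triangle z yb xb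
    have h2 : dist yb xb = r := by rw [hrdef, dist_comm]
    linarith
  have hball2 : ball xb (2 * r) ⊆ ball (0 : EuclideanSpace ℝ (Fin n)) 1 := by
    intro z hz
    rw [mem_ball] at hz ⊢
    have h := dist_triangle z xb 0
    have h2 : dist xb 0 < 1 / 4 := mem_ball.mp hxb
    linarith
  have hball3 : ball yb r ⊆ ball (0 : EuclideanSpace ℝ (Fin n)) 1 := hball1.trans hball2
  have hcx : Continuous fun x : EuclideanSpace ℝ (Fin n) => u xb + ⟪b xb, x - xb⟫ :=
    continuous_const.add (continuous_const.inner (continuous_id.sub continuous_const))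
  have hcy : Continuous fun x : EuclideanSpace ℝ (Fin n) => u yb + ⟪b yb, x - yb⟫ :=
    continuous_const.add (continuous_const.inner (continuous_id.sub continuous_const))
  have Iux2 : IntegrableOn (fun x => |u x - (u xb + ⟪b xb, x - xb⟫)|) (ball xb (2 * r)) :=
    ((hu.mono_set hball2).sub (GradOsc.integrableOn_ball_of_continuous hcx _ _)).abs
  have Iux1 : IntegrableOn (fun x => |u x - (u xb + ⟪b xb, x - xb⟫)|) (ball yb r) :=
    Iux2.mono_set hball1
  have Iuy1 : IntegrableOn (fun x => |u x - (u yb + ⟪b yb, x - yb⟫)|) (ball yb r) :=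
    ((hu.mono_set hball3).sub (GradOsc.integrableOn_ball_of_continuous hcy _ _)).abs
  have hpt : ∀ x : EuclideanSpace ℝ (Fin n),
      (u xb - u yb + ⟪b xb, yb - xb⟫) + ⟪b xb - b yb, x - yb⟫
        = (u xb + ⟪b xb, x - xb⟫) - (u yb + ⟪b yb, x - yb⟫) := by
    intro x
    have e1 : ⟪b xb, x - xb⟫ = ⟪b xb, x - yb⟫ + ⟪b xb, yb - xb⟫ := by
      rw [← inner_add_right]; congr 1; abel
    rw [inner_sub_left, e1]; ring
  have hlow : κ * (‖b xb - b yb‖ * r)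
      ≤ ⨍ x in ball yb r, |(u xb + ⟪b xb, x - xb⟫) - (u yb + ⟪b yb, x - yb⟫)| := by
    have h := hκ (b xb - b yb) (u xb - u yb + ⟪b xb, yb - xb⟫) yb r hr0
    simpa only [hpt] using h
  have hsplit : ⨍ x in ball yb r, |(u xb + ⟪b xb, x - xb⟫) - (u yb + ⟪b yb, x - yb⟫)|
      ≤ (⨍ x in ball yb r, |u x - (u xb + ⟪b xb, x - xb⟫)|)
        + ⨍ x in ball yb r, |u x - (u yb + ⟪b yb, x - yb⟫)| := by
    rw [setAverage_eq, setAverage_eq, setAverage_eq, smul_eq_mul, smul_eq_mul, smul_eq_mul,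
      ← mul_add]
    refine mul_le_mul_of_nonneg_left ?_ (by positivity)
    rw [← integral_add Iux1 Iuy1]
    refine setIntegral_mono_on ?_ (Iux1.add Iuy1) measurableSet_ball ?_
    · exact GradOsc.integrableOn_ball_of_continuous ((hcx.sub hcy).abs) _ _
    · intro x _
      have he : (u xb + ⟪b xb, x - xb⟫) - (u yb + ⟪b yb, x - yb⟫)
          = -(u x - (u xb + ⟪b xb, x - xb⟫)) + (u x - (u yb + ⟪b yb, x - yb⟫)) := by ring
      rw [he]
      exact le_trans (abs_add_le _ _) (by rw [abs_neg])
  have hm1 : (volume (ball yb r)).toReal = r ^ n * V := GradOsc.measure_ball_toReal hn yb hr0.le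
  have hm2 : (volume (ball xb (2 * r))).toReal = (2 * r) ^ n * V :=
    GradOsc.measure_ball_toReal hn xb (by linarith)
  have henl : ⨍ x in ball yb r, |u x - (u xb + ⟪b xb, x - xb⟫)|
      ≤ 2 ^ n * ((2 * r) * δ (2 * r)) := by
    have hmono : ∫ x in ball yb r, |u x - (u xb + ⟪b xb, x - xb⟫)|
        ≤ ∫ x in ball xb (2 * r), |u x - (u xb + ⟪b xb, x - xb⟫)| :=
      setIntegral_mono_set Iux2 (by filter_upwards with x using abs_nonneg _)
        (HasSubset.Subset.eventuallyLE hball1)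
    have hpos2 : (0 : ℝ) < (2 * r) ^ n * V := by positivity
    have hx2' : ∫ x in ball xb (2 * r), |u x - (u xb + ⟪b xb, x - xb⟫)|
        ≤ (2 * r) ^ n * V * ((2 * r) * δ (2 * r)) := by
      have h := hx2
      rw [setAverage_eq, smul_eq_mul, measureReal_def, hm2] at h
      have h' := mul_le_mul_of_nonneg_left h hpos2.le
      calc ∫ x in ball xb (2 * r), |u x - (u xb + ⟪b xb, x - xb⟫)|
          = (2 * r) ^ n * V * (((2 * r) ^ n * V)⁻¹
              * ∫ x in ball xb (2 * r), |u x - (u xb + ⟪b xb, x - xb⟫)|) := by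
            field_simp
        _ ≤ (2 * r) ^ n * V * ((2 * r) * δ (2 * r)) := h'
    rw [setAverage_eq, smul_eq_mul, measureReal_def, hm1]
    calc (r ^ n * V)⁻¹ * ∫ x in ball yb r, |u x - (u xb + ⟪b xb, x - xb⟫)|
        ≤ (r ^ n * V)⁻¹ * ((2 * r) ^ n * V * ((2 * r) * δ (2 * r))) :=
          mul_le_mul_of_nonneg_left (hmono.trans hx2') (by positivity)
      _ = 2 ^ n * ((2 * r) * δ (2 * r)) := by
          rw [mul_pow]
          field_simp
  have h4r1 : 4 * r < 1 := by linarith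
  have hδa : δ (2 * r) ≤ δ (4 * r) := hδmono (2 * r) (4 * r) (by linarith) (by linarith) h4r1
  have hδb : δ r ≤ δ (4 * r) := hδmono r (4 * r) hr0 (by linarith) h4r1
  have hδ4 : 0 < δ (4 * r) := hδpos _ ⟨by linarith, h4r1⟩
  have step : κ * (‖b xb - b yb‖ * r) ≤ 2 ^ n * ((2 * r) * δ (2 * r)) + r * δ r :=
    hlow.trans (hsplit.trans (add_le_add henl hy1))
  have e1 : (2 : ℝ) ^ n * ((2 * r) * δ (2 * r)) ≤ 2 ^ n * ((2 * r) * δ (4 * r)) :=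
    mul_le_mul_of_nonneg_left (mul_le_mul_of_nonneg_left hδa (by linarith))
      (by positivity)
  have e2 : r * δ r ≤ r * δ (4 * r) := mul_le_mul_of_nonneg_left hδb hr0.le
  have efin : (2 : ℝ) ^ n * ((2 * r) * δ (4 * r)) + r * δ (4 * r)
      = (2 ^ (n + 1) + 1) * (r * δ (4 * r)) := by
    rw [pow_succ]; ring
  have hcomb : κ * ‖b xb - b yb‖ * r ≤ ((2 ^ (n + 1) + 1) * δ (4 * r)) * r := by
    nlinarith [step, e1, e2, efin]
  have hdiv : κ * ‖b xb - b yb‖ ≤ (2 ^ (n + 1) + 1) * δ (4 * r) :=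
    le_of_mul_le_mul_right hcomb hr0
  have hgoal : ‖b xb - b yb‖ ≤ ((2 ^ (n + 1) + 1) / κ) * δ (4 * r) := by
    rw [div_mul_eq_mul_div, le_div_iff₀ hκpos]
    nlinarith [hdiv]
  have hC : (0 : ℝ) < (2 ^ (n + 1) + 1) / κ := by positivity
  nlinarith [hgoal, hδ4, hC]
end

section
/- Let φ : (0,1) → [0,∞) be measurable and satisfy, for some μ > 1, max_{r/2 ≤ s ≤ 2r} φ(s) ≤ μ φ(r) whenever [r/2, 2r] ⊂ (0,1), together with ∫_0^1 r^{-1} φ(r) dr < ∞. Then φ(r) → 0 as r → 0⁺. -/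
open MeasureTheory Metric Set Filter
open scoped Topology

/-- If `φ : (0,1) → [0,∞)` is measurable, satisfies
`max_{r/2 ≤ s ≤ 2r} φ(s) ≤ μ φ(r)` (for some `μ > 1`) whenever `[r/2, 2r] ⊂ (0,1)`, and
`∫_0^1 r⁻¹ φ(r) dr < ∞`, then `φ(r) → 0` as `r → 0⁺`. -/
theorem dini_condition_implies_vanishing_at_zero
    (φ : ℝ → ℝ) (hmeas : Measurable φ)
    (hnonneg : ∀ r ∈ Ioo (0:ℝ) 1, 0 ≤ φ r)
    (μ : ℝ) (hμ : 1 < μ)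
    (hdoubling : ∀ r s : ℝ, 0 < r → 2 * r < 1 → r / 2 ≤ s → s ≤ 2 * r → φ s ≤ μ * φ r)
    (hdini : IntegrableOn (fun r => φ r / r) (Ioo (0:ℝ) 1)) :
    Tendsto φ (𝓝[>] (0:ℝ)) (𝓝 0) := by
  have hμ0 : (0:ℝ) < μ := lt_trans one_pos hμ
  set f : ℝ → ℝ := fun r => φ r / r with hf
  set F : ℝ → ℝ := fun x => ∫ t in Set.Ioc (0:ℝ) x, f t with hFdef
  have hInt : IntegrableOn f (Icc (0:ℝ) 1) := hdini.congr_set_ae Ioo_ae_eq_Icc.symm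
  have hFcont : ContinuousOn F (Icc (0:ℝ) 1) := intervalIntegral.continuousOn_primitive hInt
  have hF0 : F 0 = 0 := by simp [hFdef]
  have hFt : Tendsto F (𝓝[Icc (0:ℝ) 1] 0) (𝓝 0) := by
    have := (hFcont 0 (by norm_num)).tendsto
    rwa [hF0] at this
  have htwo : Tendsto (fun r : ℝ => 2 * r) (𝓝[>] (0:ℝ)) (𝓝[Icc (0:ℝ) 1] 0) := by
    apply tendsto_nhdsWithin_of_tendsto_nhds_of_eventually_within
    · have : Tendsto (fun r : ℝ => 2 * r) (𝓝 (0:ℝ)) (𝓝 (2*0)) :=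
        (continuous_const.mul continuous_id).tendsto 0
      simpa using this.mono_left nhdsWithin_le_nhds
    · filter_upwards [Ioo_mem_nhdsGT_of_mem (by norm_num : (0:ℝ) ∈ Ico (0:ℝ) (1/2))] with r hr
      constructor <;> [linarith [hr.1]; linarith [hr.2]]
  have hF2 : Tendsto (fun r : ℝ => 2 * μ * F (2 * r)) (𝓝[>] (0:ℝ)) (𝓝 0) := by
    have := (hFt.comp htwo).const_mul (2*μ)
    simpa using this
  have key : ∀ r ∈ Ioo (0:ℝ) (1/4), φ r ≤ 2 * μ * F (2 * r) := by
    intro r hr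
    obtain ⟨hr0, hr4⟩ := hr
    have hIntsub : IntegrableOn f (Ioc r (2*r)) := by
      apply hdini.mono_set
      intro s hs
      exact ⟨lt_trans hr0 hs.1, by linarith [hs.2]⟩
    have hlow : ∀ s ∈ Ioc r (2*r), φ r / (2*r*μ) ≤ f s := by
      intro s hs
      obtain ⟨hs1, hs2⟩ := hs
      have hs0 : 0 < s := lt_trans hr0 hs1
      have hd : φ r ≤ μ * φ s :=
        hdoubling s r hs0 (by linarith) (by linarith) (by linarith)
      have hφs : 0 ≤ φ s := hnonneg s ⟨hs0, by linarith⟩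
      have h1 : φ r / μ ≤ φ s := (div_le_iff₀ hμ0).mpr (by linarith [hd, mul_comm μ (φ s)])
      have h2 : φ s / (2*r) ≤ φ s / s := by
        gcongr
      have h3 : φ r / (2*r*μ) ≤ φ s / (2*r) := by
        rw [div_le_div_iff₀ (by positivity) (by positivity)]
        have := (div_le_iff₀ hμ0).mp h1
        nlinarith
      exact le_trans h3 h2
    have hconst : ∫ _ in Ioc r (2*r), φ r / (2*r*μ) = r * (φ r / (2*r*μ)) := by
      rw [setIntegral_const]
      congr 1
      rw [Real.volume_real_Ioc_of_le (by linarith)]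
      ring
    have hmono : ∫ _ in Ioc r (2*r), φ r / (2*r*μ) ≤ ∫ s in Ioc r (2*r), f s := by
      apply setIntegral_mono_on ((integrableOn_const_iff).mpr (Or.inr (by simp [Real.volume_Ioc]))) hIntsub measurableSet_Ioc
      intro s hs
      exact hlow s hs
    have hsub : ∫ s in Ioc r (2*r), f s ≤ F (2*r) := by
      apply setIntegral_mono_set
      · apply hdini.mono_set
        intro s hs
        exact ⟨hs.1, by linarith [hs.2]⟩
      · rw [EventuallyLE, ae_restrict_iff' measurableSet_Ioc]
        filter_upwards with s hs
        have hs0 : 0 < s := hs.1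
        have : 0 ≤ φ s := hnonneg s ⟨hs0, by linarith [hs.2]⟩
        positivity
      · exact (show Ioc r (2*r) ⊆ Ioc 0 (2*r) from fun s hs => ⟨lt_trans hr0 hs.1, hs.2⟩).eventuallyLE
    have : r * (φ r / (2*r*μ)) ≤ F (2*r) := by
      rw [← hconst]; exact le_trans hmono hsub
    have heq : r * (φ r / (2*r*μ)) = φ r / (2*μ) := by
      field_simp
    rw [heq] at this
    calc φ r = 2*μ * (φ r / (2*μ)) := by field_simp
    _ ≤ 2*μ * F (2*r) := by nlinarith
  apply tendsto_of_tendsto_of_tendsto_of_le_of_le' (tendsto_const_nhds) hF2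
  · filter_upwards [Ioo_mem_nhdsGT_of_mem (by norm_num : (0:ℝ) ∈ Ico (0:ℝ) (1/4))] with r hr
    exact hnonneg r ⟨hr.1, by linarith [hr.2]⟩
  · filter_upwards [Ioo_mem_nhdsGT_of_mem (by norm_num : (0:ℝ) ∈ Ico (0:ℝ) (1/4))] with r hr
    exact key r hr
end

section
/- Let φ : (0,1) → [0,∞) be measurable and satisfy, for some μ > 1, max_{r/2 ≤ s ≤ 2r} φ(s) ≤ μ φ(r) whenever [r/2, 2r] ⊂ (0,1). Then there is a constant C depending only on μ such that for every integer k ≥ 1, ∑_{j=1}^{k} 4^{j} φ(4^{-j}) ≤ C ∫_{4^{-(k+1)}}^{1/4} r^{-2} φ(r) dr. -/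
open MeasureTheory Metric Set Filter
open scoped Topology

/-- If `φ : (0,1) → [0,∞)` is measurable and satisfies
`max_{r/2 ≤ s ≤ 2r} φ(s) ≤ μ φ(r)` (for some `μ > 1`) whenever `[r/2, 2r] ⊂ (0,1)`, then
there is `C = C(μ)` such that for every `k ≥ 1`,
`∑_{j=1}^k 4ʲ φ(4⁻ʲ) ≤ C ∫_{4^{-(k+1)}}^{1/4} r⁻² φ(r) dr`. -/
theorem dyadic_weighted_sum_bounded_by_integral
    (μ : ℝ) (hμ : 1 < μ) :
    ∃ C : ℝ, 0 < C ∧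
      ∀ φ : ℝ → ℝ, Measurable φ → (∀ r ∈ Ioo (0:ℝ) 1, 0 ≤ φ r) →
        (∀ r s : ℝ, 0 < r → 2 * r < 1 → r / 2 ≤ s → s ≤ 2 * r → φ s ≤ μ * φ r) →
        ∀ k : ℕ, 1 ≤ k →
          ∑ j ∈ Finset.Icc 1 k, (4:ℝ) ^ (j:ℤ) * φ ((4:ℝ) ^ (-(j:ℤ)))
            ≤ C * ∫ r in Icc ((4:ℝ) ^ (-((k:ℤ) + 1))) (1/4 : ℝ), φ r / r ^ 2 := by
  have hμ0 : (0:ℝ) < μ := lt_trans one_pos hμ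
  refine ⟨μ ^ 2 / 3, by positivity, ?_⟩
  intro φ hmeas hpos hharnack k hk
  set f : ℝ → ℝ := fun r => φ r / r ^ 2 with hf
  set b : ℕ → ℝ := fun j => (4:ℝ) ^ (-(j:ℤ)) with hb
  set a : ℕ → ℝ := fun j => (4:ℝ) ^ (-(j:ℤ) - 1) with ha
  have h4 : (0:ℝ) < 4 := by norm_num
  have hbpos : ∀ j, 0 < b j := fun j => zpow_pos h4 _
  have hapos : ∀ j, 0 < a j := fun j => zpow_pos h4 _
  have hab : ∀ j, a j = b j / 4 := by
    intro j
    simp only [ha, hb]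
    rw [zpow_sub₀ (by norm_num : (4:ℝ) ≠ 0)]
    norm_num
  have haltb : ∀ j, a j ≤ b j := by
    intro j; rw [hab]; linarith [hbpos j]
  have hble : ∀ j : ℕ, 1 ≤ j → b j ≤ 1/4 := by
    intro j hj
    have : (-(j:ℤ)) ≤ -1 := by omega
    calc b j ≤ (4:ℝ) ^ (-1:ℤ) := zpow_le_zpow_right₀ (by norm_num) this
    _ = 1/4 := by norm_num
  -- key Harnack-chain lower bound
  have key : ∀ j : ℕ, 1 ≤ j → ∀ r ∈ Icc (a j) (b j), φ (b j) ≤ μ ^ 2 * φ r := by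
    intro j hj r hr
    have hr0 : 0 < r := lt_of_lt_of_le (hapos j) hr.1
    have hrb : r ≤ b j := hr.2
    have hbj : b j ≤ 1/4 := hble j hj
    have h2r : 2 * r < 1 := by nlinarith
    have hr1 : r < 1 := by linarith
    have hφr : 0 ≤ φ r := hpos r ⟨hr0, hr1⟩
    by_cases hcase : b j ≤ 2 * r
    · have h1 : φ (b j) ≤ μ * φ r :=
        hharnack r (b j) hr0 h2r (by linarith) hcase
      nlinarith [mul_nonneg (mul_nonneg (by linarith : (0:ℝ) ≤ μ - 1) hμ0.le) hφr]
    · push_neg at hcase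
      have h4r : b j ≤ 4 * r := by
        have := hr.1; rw [hab] at this; linarith
      have hA : φ (b j) ≤ μ * φ (2 * r) := by
        have := hharnack (2*r) (b j) (by linarith) (by nlinarith) (by linarith) (by linarith)
        linarith
      have hB : φ (2 * r) ≤ μ * φ r :=
        hharnack r (2*r) hr0 h2r (by linarith) le_rfl
      nlinarith [mul_le_mul_of_nonneg_left hB hμ0.le]
  -- upper bound for integrability
  have ub : ∀ j : ℕ, 1 ≤ j → ∀ r ∈ Icc (a j) (b j), φ r ≤ μ * φ (b j / 2) := by
    intro j hj r hr
    have hbj : b j ≤ 1/4 := hble j hj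
    have h1 : 0 < b j / 2 := by linarith [hbpos j]
    refine hharnack (b j / 2) r h1 (by linarith) ?_ (by linarith [hr.2])
    have := hr.1; rw [hab] at this; linarith
  have hbhalf : ∀ j : ℕ, 1 ≤ j → 0 ≤ φ (b j / 2) := by
    intro j hj
    exact hpos _ ⟨by linarith [hbpos j], by linarith [hble j hj]⟩
  -- integrability of f on each dyadic block
  have hint : ∀ j : ℕ, 1 ≤ j → IntervalIntegrable f volume (a j) (b j) := by
    intro j hj
    rw [intervalIntegrable_iff_integrableOn_Icc_of_le (haltb j)]
    apply Measure.integrableOn_of_bounded (M := μ * φ (b j / 2) / (a j) ^ 2)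
      measure_Icc_lt_top.ne
      ((hmeas.div (measurable_id.pow_const 2)).aestronglyMeasurable)
    filter_upwards [ae_restrict_mem measurableSet_Icc] with r hr
    have hr0 : 0 < r := lt_of_lt_of_le (hapos j) hr.1
    have hr1 : r < 1 := lt_of_le_of_lt hr.2 (by linarith [hble j hj])
    have hφr : 0 ≤ φ r := hpos r ⟨hr0, hr1⟩
    have hfr : 0 ≤ φ r / r ^ 2 := div_nonneg hφr (by positivity)
    simp only [id_eq, Pi.div_apply]
    rw [Real.norm_of_nonneg hfr]
    exact div_le_div₀ (by nlinarith [hbhalf j hj]) (ub j hj r hr) (by positivity)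
      (by nlinarith [hr.1, hapos j])
  -- lower bound for each block integral
  have piece : ∀ j : ℕ, 1 ≤ j →
      3 * ((4:ℝ) ^ (j:ℤ) * φ (b j)) ≤ μ ^ 2 * ∫ r in (a j)..(b j), f r := by
    intro j hj
    set c := φ (b j) / μ ^ 2 with hc
    have hzero : (0:ℝ) ∉ Set.uIcc (a j) (b j) := by
      rw [Set.uIcc_of_le (haltb j)]
      intro h
      exact absurd h.1 (not_le.2 (hapos j))
    have hg : IntervalIntegrable (fun r => c * r ^ (-2:ℤ)) volume (a j) (b j) :=
      (intervalIntegral.intervalIntegrable_zpow (Or.inr hzero)).const_mul c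
    have hgeq : ∀ r ∈ Icc (a j) (b j), c * r ^ (-2:ℤ) ≤ f r := by
      intro r hr
      have hr0 : 0 < r := lt_of_lt_of_le (hapos j) hr.1
      have hkey := key j hj r hr
      have h1 : c ≤ φ r := by
        rw [hc, div_le_iff₀ (by positivity)]
        linarith [hkey]
      have h2 : r ^ (-2:ℤ) = (r ^ 2)⁻¹ := by
        rw [zpow_neg]; norm_num
      rw [h2, hf]
      simp only
      rw [div_eq_mul_inv]
      exact mul_le_mul_of_nonneg_right h1 (by positivity)
    have hmono := intervalIntegral.integral_mono_on (haltb j) hg (hint j hj) hgeq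
    have hcomp : ∫ r in (a j)..(b j), c * r ^ (-2:ℤ) = c * (3 * (4:ℝ) ^ (j:ℤ)) := by
      rw [intervalIntegral.integral_const_mul, integral_zpow (Or.inr ⟨by norm_num, hzero⟩)]
      congr 1
      have : ((-2:ℤ) + 1) = -1 := by norm_num
      rw [this]
      have e1 : (b j) ^ (-1:ℤ) = (4:ℝ) ^ (j:ℤ) := by
        rw [hb, ← zpow_mul]; ring_nf
      have e2 : (a j) ^ (-1:ℤ) = (4:ℝ) ^ ((j:ℤ)+1) := by
        rw [ha, ← zpow_mul]; ring_nf
      rw [e1, e2, zpow_add₀ (by norm_num : (4:ℝ) ≠ 0)]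
      push_cast
      ring
    rw [hcomp] at hmono
    have hφb : 0 ≤ φ (b j) := hpos _ ⟨hbpos j, by linarith [hble j hj]⟩
    have h3 : c * (3 * (4:ℝ) ^ (j:ℤ)) = 3 * ((4:ℝ) ^ (j:ℤ) * φ (b j)) / μ ^ 2 := by
      rw [hc]; ring
    rw [h3] at hmono
    rw [div_le_iff₀ (by positivity)] at hmono
    linarith [hmono]
  -- telescoping: sum of block integrals equals the full integral
  set c : ℕ → ℝ := fun i => (4:ℝ) ^ ((i:ℤ) - ((k:ℤ) + 1)) with hcdef
  have hci : ∀ i : ℕ, i < k → c i = a (k - i) ∧ c (i+1) = b (k - i) := by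
    intro i hi
    constructor
    · simp only [hcdef, ha]
      congr 1
      have : ((k - i : ℕ) : ℤ) = (k:ℤ) - (i:ℤ) := by
        rw [Nat.cast_sub hi.le]
      rw [this]; ring
    · simp only [hcdef, hb]
      congr 1
      have : ((k - i : ℕ) : ℤ) = (k:ℤ) - (i:ℤ) := by
        rw [Nat.cast_sub hi.le]
      rw [this]; push_cast; ring
  have hadj : ∀ i : ℕ, i < k → IntervalIntegrable f volume (c i) (c (i+1)) := by
    intro i hi
    obtain ⟨e1, e2⟩ := hci i hi
    rw [e1, e2]
    exact hint (k - i) (by omega)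
  have htele : ∑ i ∈ Finset.range k, (∫ r in (c i)..(c (i+1)), f r) = ∫ r in (c 0)..(c k), f r :=
    intervalIntegral.sum_integral_adjacent_intervals hadj
  set G : ℕ → ℝ := fun j => ∫ r in (a j)..(b j), f r with hG
  have hsum1 : ∑ j ∈ Finset.Icc 1 k, G j = ∑ i ∈ Finset.range k, G (k - i) := by
    rw [← Finset.Ico_add_one_right_eq_Icc, Finset.sum_Ico_eq_sum_range]
    have hrefl := Finset.sum_range_reflect (fun i => G (1 + i)) k
    simp only [Nat.add_sub_cancel, Nat.succ_sub_one] at hrefl ⊢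
    rw [← hrefl]
    apply Finset.sum_congr rfl
    intro i hi
    rw [Finset.mem_range] at hi
    congr 1
    omega
  have hsum2 : ∑ i ∈ Finset.range k, G (k - i) = ∫ r in (c 0)..(c k), f r := by
    rw [← htele]
    apply Finset.sum_congr rfl
    intro i hi
    rw [Finset.mem_range] at hi
    obtain ⟨e1, e2⟩ := hci i hi
    rw [hG]; simp only; rw [e1, e2]
  -- identify the endpoints
  have hc0 : c 0 = (4:ℝ) ^ (-((k:ℤ) + 1)) := by
    simp only [hcdef]; congr 1
  have hck : c k = (1/4 : ℝ) := by
    simp only [hcdef]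
    have : ((k:ℤ) - ((k:ℤ)+1)) = -1 := by ring
    rw [this]; norm_num
  have hc0le : c 0 ≤ c k := by
    rw [hc0, hck]
    calc (4:ℝ) ^ (-((k:ℤ) + 1)) ≤ (4:ℝ) ^ (-1:ℤ) :=
        zpow_le_zpow_right₀ (by norm_num) (by omega)
      _ = 1/4 := by norm_num
  have hset : ∫ r in Icc ((4:ℝ) ^ (-((k:ℤ) + 1))) (1/4 : ℝ), f r
      = ∫ r in (c 0)..(c k), f r := by
    rw [intervalIntegral.integral_of_le hc0le, hc0, hck,
      MeasureTheory.integral_Icc_eq_integral_Ioc]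
  have hsumle : ∑ j ∈ Finset.Icc 1 k, 3 * ((4:ℝ) ^ (j:ℤ) * φ (b j))
      ≤ μ ^ 2 * ∑ j ∈ Finset.Icc 1 k, G j := by
    rw [Finset.mul_sum]
    exact Finset.sum_le_sum fun j hj => piece j (Finset.mem_Icc.1 hj).1
  have hsum3 : ∑ j ∈ Finset.Icc 1 k, 3 * ((4:ℝ) ^ (j:ℤ) * φ (b j))
      = 3 * ∑ j ∈ Finset.Icc 1 k, (4:ℝ) ^ (j:ℤ) * φ (b j) := (Finset.mul_sum _ _ _).symm
  rw [hsum3, hsum1, hsum2] at hsumle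
  rw [hset]
  linarith
end
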